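/- arXiv:2004.04920 — 2 statements merged into one kernel-verified Lean document; each statement's English description precedes it below -/
import Mathlib

section
/- Let p be a prime, α ≥ 1, and set λ = p^α. Let h ≥ 1 be coprime to λ, let a : ℕ → ℂ be λ-automatic and multiplicative, and suppose there is a Dirichlet character χ of modulus hλ such that a(n) = χ(n) for all n ≥ 1 coprime to hλ. Then there exist f₁ : ℕ → ℂ eventually periodic with f₁(0) = 1, and f₂ : ℕ → ℂ multiplicative and periodic (there exists d ≥ 1 with f₂(n+d) = f₂(n) for all n ≥ 1), such that a(n) = f₁(ν_p(n)) · f₂(n / p^{ν_p(n)}) for all n ≥ 1. -/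
/-- A sequence `f : ℕ → ℂ` is `lam`-automatic if its `lam`-kernel is finite. -/
def IsAutomatic (lam : ℕ) (f : ℕ → ℂ) : Prop :=
  {g : ℕ → ℂ | ∃ k r : ℕ, r < lam ^ k ∧ g = fun n => f (lam ^ k * n + r)}.Finite

/-- A sequence is multiplicative if `f 1 = 1` and `f (m*n) = f m * f n` for coprime `m n ≥ 1`. -/
def IsMultiplicativeSeq (f : ℕ → ℂ) : Prop :=
  f 1 = 1 ∧ ∀ m n : ℕ, 1 ≤ m → 1 ≤ n → Nat.Coprime m n → f (m * n) = f m * f n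

/-- Eventually periodic sequence. -/
def EventuallyPeriodicSeq (f : ℕ → ℂ) : Prop :=
  ∃ d : ℕ, 1 ≤ d ∧ ∃ n₀ : ℕ, ∀ n ≥ n₀, f (n + d) = f n

/-- A Dirichlet character of modulus `k`: `k`-periodic, completely multiplicative,
and vanishing exactly at arguments not coprime to `k`. -/
def IsDirichletCharacterSeq (k : ℕ) (χ : ℕ → ℂ) : Prop :=
  (∀ n : ℕ, χ (n + k) = χ n) ∧ (∀ m n : ℕ, χ (m * n) = χ m * χ n) ∧
    (∀ n : ℕ, χ n = 0 ↔ 1 < Nat.gcd n k)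

open Finset

namespace SP16


/-- geometric "repunit" in base lam -/
def Rep (lam i : ℕ) : ℕ := ∑ j ∈ Finset.range i, lam ^ j

lemma rep_lt {lam : ℕ} (hl : 2 ≤ lam) : ∀ i, Rep lam i < lam ^ i := by
  intro i
  induction i with
  | zero => simp [Rep]
  | succ i ih =>
      have : Rep lam (i + 1) = Rep lam i + lam ^ i := by
        simp [Rep, Finset.sum_range_succ]
      rw [this, pow_succ]
      have h2 : lam ^ i + lam ^ i ≤ lam ^ i * lam := by
        have : lam ^ i * 2 ≤ lam ^ i * lam := Nat.mul_le_mul_left _ hl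
        omega
      omega

lemma rep_add (lam m n : ℕ) : Rep lam (m + n) = Rep lam m + lam ^ m * Rep lam n := by
  unfold Rep
  rw [Finset.sum_range_add, Finset.mul_sum]
  congr 1
  refine Finset.sum_congr rfl fun j _ => ?_
  rw [pow_add]

lemma rep_eq_one_add {lam i : ℕ} (hi : 1 ≤ i) : ∃ t, Rep lam i = 1 + lam * t := by
  obtain ⟨j, rfl⟩ : ∃ j, i = 1 + j := ⟨i - 1, by omega⟩
  refine ⟨Rep lam j, ?_⟩
  rw [rep_add]
  simp [Rep]

lemma pigeon {K : Set (ℕ → ℂ)} (hK : K.Finite) (G : ℕ → (ℕ → ℂ))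
    (hG : ∀ i, 1 ≤ i → G i ∈ K) :
    ∃ i₁ i₂, 1 ≤ i₁ ∧ i₁ < i₂ ∧ G i₁ = G i₂ := by
  obtain ⟨x, hx, y, hy, hxy, hmap⟩ :=
    (Set.Ici_infinite 1).exists_ne_map_eq_of_mapsTo (fun i (hi : i ∈ Set.Ici 1) => hG i hi) hK
  rcases lt_or_gt_of_ne hxy with hlt | hgt
  · exact ⟨x, y, hx, hlt, hmap⟩
  · exact ⟨y, x, hy, hgt, hmap.symm⟩

lemma exists_rep {A R x : ℕ} (hR : R < A) (hx : x ≡ R [MOD A]) : ∃ n, x = A * n + R := by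
  have hxR : x % A = R := by
    have := hx
    unfold Nat.ModEq at this
    rw [Nat.mod_eq_of_lt hR] at this
    exact this
  have hle : R ≤ x := hxR ▸ Nat.mod_le x A
  have hdvd : A ∣ x - R := (Nat.modEq_iff_dvd' hle).mp hx.symm
  obtain ⟨n, hn⟩ := hdvd
  exact ⟨n, by omega⟩

lemma modeq_prod (g : ℕ → ℕ) (F : Finset ℕ)
    (hco : ∀ i ∈ F, ∀ j ∈ F, i ≠ j → Nat.Coprime (g i) (g j)) :
    ∀ {x y : ℕ}, (∀ i ∈ F, x ≡ y [MOD g i]) → x ≡ y [MOD ∏ i ∈ F, g i] := by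
  induction F using Finset.induction_on with
  | empty => intro x y _; simpa using (Nat.modEq_one)
  | @insert q F hqF ih =>
      intro x y hall
      rw [Finset.prod_insert hqF]
      have h1 : x ≡ y [MOD g q] := hall q (Finset.mem_insert_self _ _)
      have h2 : x ≡ y [MOD ∏ i ∈ F, g i] :=
        ih (fun i hi j hj hij =>
          hco i (Finset.mem_insert_of_mem hi) j (Finset.mem_insert_of_mem hj) hij)
          (fun i hi => hall i (Finset.mem_insert_of_mem hi))
      have hc : Nat.Coprime (g q) (∏ i ∈ F, g i) :=
        Nat.Coprime.prod_right (fun i hi =>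
          hco q (Finset.mem_insert_self _ _) i (Finset.mem_insert_of_mem hi)
            (by rintro rfl; exact hqF hi))
      exact (Nat.modEq_and_modEq_iff_modEq_mul hc).mp ⟨h1, h2⟩

lemma coprime_of_primes {x M : ℕ} (h : ∀ r, r.Prime → r ∣ x → ¬ r ∣ M) : Nat.Coprime x M := by
  by_contra hc
  obtain ⟨r, hr, hrx, hrM⟩ := Nat.Prime.not_coprime_iff_dvd.mp hc
  exact h r hr hrx hrM

lemma crt3 {m₁ m₂ m₃ : ℕ} (h12 : Nat.Coprime m₁ m₂) (h13 : Nat.Coprime m₁ m₃)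
    (h23 : Nat.Coprime m₂ m₃) (r₁ r₂ r₃ : ℕ) :
    ∃ x, x ≡ r₁ [MOD m₁] ∧ x ≡ r₂ [MOD m₂] ∧ x ≡ r₃ [MOD m₃] := by
  obtain ⟨z, hz1, hz2⟩ := Nat.chineseRemainder h12 r₁ r₂
  have h123 : Nat.Coprime (m₁ * m₂) m₃ := Nat.Coprime.mul h13 h23
  obtain ⟨x, hx1, hx2⟩ := Nat.chineseRemainder h123 z r₃
  refine ⟨x, ?_, ?_, hx2⟩
  · exact (Nat.ModEq.of_mul_right m₂ hx1).trans hz1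
  · exact (Nat.ModEq.of_mul_left m₁ hx1).trans hz2

lemma chi_congr {M : ℕ} {χ : ℕ → ℂ} (hper : ∀ n, χ (n + M) = χ n) :
    ∀ {m n : ℕ}, m ≡ n [MOD M] → χ m = χ n := by
  have key : ∀ k n, χ (n + k * M) = χ n := by
    intro k
    induction k with
    | zero => simp
    | succ k ih =>
        intro n
        have : n + (k + 1) * M = (n + k * M) + M := by ring
        rw [this, hper, ih]
  intro m n hmn
  rcases le_total m n with hle | hle
  · obtain ⟨k, hk⟩ := (Nat.modEq_iff_dvd' hle).mp hmn
    have hn : n = m + k * M := by rw [Nat.mul_comm]; omega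
    rw [hn, key]
  · obtain ⟨k, hk⟩ := (Nat.modEq_iff_dvd' hle).mp hmn.symm
    have hm : m = n + k * M := by rw [Nat.mul_comm]; omega
    rw [hm, key]

lemma modeq_div {P M y y' : ℕ} (hP : P ≠ 0) (h1 : P ∣ y) (h2 : P ∣ y')
    (h : y ≡ y' [MOD P * M]) : y / P ≡ y' / P [MOD M] := by
  apply Nat.ModEq.mul_left_cancel' (c := P) hP
  rwa [Nat.mul_div_cancel' h1, Nat.mul_div_cancel' h2]


def RadPart (F : Finset ℕ) (n : ℕ) : ℕ := ∏ q ∈ F, q ^ n.factorization q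

lemma fact_eq_of {q y e : ℕ} (hq : q.Prime) (hy : y ≠ 0) (h1 : q ^ e ∣ y)
    (h2 : ¬ q ^ (e + 1) ∣ y) : y.factorization q = e := by
  have hle : e ≤ y.factorization q := (hq.pow_dvd_iff_le_factorization hy).mp h1
  have hlt : ¬ (e + 1 ≤ y.factorization q) := fun hcon =>
    h2 ((hq.pow_dvd_iff_le_factorization hy).mpr hcon)
  omega

lemma fact_eq_of_modeq {q y c K : ℕ} (hq : q.Prime) (hy : y ≠ 0) (hc : c ≠ 0)
    (hK : c.factorization q < K) (h : y ≡ c [MOD q ^ K]) :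
    y.factorization q = c.factorization q := by
  set e := c.factorization q with he
  have h1 : q ^ e ∣ y := by
    have hec : q ^ e ∣ c := Nat.ordProj_dvd c q
    have : y ≡ c [MOD q ^ e] := Nat.ModEq.of_dvd (pow_dvd_pow q (le_of_lt hK)) h
    have hc0 : c ≡ 0 [MOD q ^ e] := (Nat.modEq_zero_iff_dvd).mpr hec
    exact (Nat.modEq_zero_iff_dvd).mp (this.trans hc0)
  have h2 : ¬ q ^ (e + 1) ∣ y := by
    intro hcon
    have hy0 : y ≡ 0 [MOD q ^ (e + 1)] := (Nat.modEq_zero_iff_dvd).mpr hcon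
    have : c ≡ 0 [MOD q ^ (e + 1)] :=
      (Nat.ModEq.of_dvd (pow_dvd_pow q hK) h.symm).trans hy0
    exact Nat.pow_succ_factorization_not_dvd hc hq ((Nat.modEq_zero_iff_dvd).mp this)
  exact fact_eq_of hq hy h1 h2

lemma msplit (a : ℕ → ℂ) (ha : IsMultiplicativeSeq a) :
    ∀ (F : Finset ℕ), (∀ q ∈ F, Nat.Prime q) → ∀ n : ℕ, n ≠ 0 →
    RadPart F n ∣ n ∧ (n / RadPart F n ≠ 0) ∧ (n / RadPart F n ∣ n) ∧
    (∀ q ∈ F, ¬ q ∣ (n / RadPart F n)) ∧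
    a n = (∏ q ∈ F, a (q ^ n.factorization q)) * a (n / RadPart F n) := by
  intro F
  induction F using Finset.induction_on with
  | empty =>
      intro _ n hn
      simp only [RadPart, Finset.prod_empty, Nat.div_one, one_dvd, ne_eq, hn,
        not_false_eq_true, dvd_refl, Finset.notMem_empty, one_mul, true_and]
      exact ⟨fun q hq => absurd hq (by simp), trivial⟩
  | @insert q F hqF ih =>
      intro hprime n hn
      have hq : q.Prime := hprime q (Finset.mem_insert_self _ _)
      set e := n.factorization q with he
      set n₁ := n / q ^ e with hn₁def
      have hdvd : q ^ e ∣ n := Nat.ordProj_dvd n q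
      have hmul : q ^ e * n₁ = n := Nat.ordProj_mul_ordCompl_eq_self n q
      have hn₁0 : n₁ ≠ 0 := by
        intro h0; rw [h0, mul_zero] at hmul; exact hn hmul.symm
      have hqn₁ : ¬ q ∣ n₁ := Nat.not_dvd_ordCompl hq hn
      have hfact : ∀ q', q' ≠ q → n₁.factorization q' = n.factorization q' := by
        intro q' hne
        rw [hn₁def, Nat.factorization_ordCompl]
        exact Finsupp.erase_ne hne
      obtain ⟨ih1, ih2, ih3, ih4, ih5⟩ :=
        ih (fun q' h' => hprime q' (Finset.mem_insert_of_mem h')) n₁ hn₁0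
      have hR1 : RadPart F n₁ = RadPart F n := by
        unfold RadPart
        exact Finset.prod_congr rfl (fun q' h' => by
          rw [hfact q' (by rintro rfl; exact hqF h')])
      have hRins : RadPart (insert q F) n = q ^ e * RadPart F n := by
        unfold RadPart; rw [Finset.prod_insert hqF]
      have hcore : n / RadPart (insert q F) n = n₁ / RadPart F n₁ := by
        rw [hRins, hR1, ← Nat.div_div_eq_div_mul, ← hn₁def]
      have hRdvd : RadPart (insert q F) n ∣ n := by
        rw [hRins]
        have : RadPart F n ∣ n₁ := hR1 ▸ ih1
        calc q ^ e * RadPart F n ∣ q ^ e * n₁ := mul_dvd_mul_left _ this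
          _ = n := hmul
      have hcop : Nat.Coprime (q ^ e) n₁ :=
        Nat.Coprime.pow_left e ((Nat.Prime.coprime_iff_not_dvd hq).mpr hqn₁)
      have hsplit : a n = a (q ^ e) * a n₁ := by
        rw [← hmul]
        exact ha.2 _ _ (Nat.one_le_iff_ne_zero.mpr (pow_ne_zero e hq.pos.ne'))
          (Nat.one_le_iff_ne_zero.mpr hn₁0) hcop
      refine ⟨hRdvd, ?_, ?_, ?_, ?_⟩
      · rw [hcore]; exact ih2
      · rw [hcore]
        exact dvd_trans ih3 ⟨q ^ e, by rw [← hmul]; ring⟩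
      · intro q' hq'
        rcases Finset.mem_insert.mp hq' with rfl | hq'F
        · rw [hcore]; intro hcon; exact hqn₁ (dvd_trans hcon ih3)
        · rw [hcore]; exact ih4 q' hq'F
      · rw [hcore, hsplit, ih5, Finset.prod_insert hqF, ← he]
        have hprod : (∏ q' ∈ F, a (q' ^ n₁.factorization q')) =
            (∏ q' ∈ F, a (q' ^ n.factorization q')) :=
          Finset.prod_congr rfl (fun q' h' => by
            rw [hfact q' (by rintro rfl; exact hqF h')])
        rw [hprod]; ring

lemma chi_ne {M : ℕ} {χ : ℕ → ℂ} (hχ : IsDirichletCharacterSeq M χ) {m : ℕ}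
    (hm : Nat.Coprime m M) : χ m ≠ 0 := by
  intro h0
  have := (hχ.2.2 m).mp h0
  rw [Nat.Coprime] at hm
  omega

lemma chi_one {M : ℕ} {χ : ℕ → ℂ} (hχ : IsDirichletCharacterSeq M χ) : χ 1 = 1 := by
  have hne : χ 1 ≠ 0 := chi_ne hχ (Nat.coprime_one_left M)
  have : χ (1 * 1) = χ 1 * χ 1 := hχ.2.1 1 1
  rw [one_mul] at this
  field_simp at this
  tauto

/-- the `T`-part of the modulus `h*lam` -/
def MT (h : ℕ) (T : Finset ℕ) : ℕ := ∏ q ∈ T, q ^ h.factorization q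

/-- the complementary part of the modulus `h*lam` -/
def CoT (h lam : ℕ) (T : Finset ℕ) : ℕ :=
  lam * ∏ r ∈ h.primeFactors \ T, r ^ h.factorization r

/-- CRT lift: `≡ 1 mod MT` and `≡ m mod CoT`. -/
noncomputable def LiftT (h lam : ℕ) (T : Finset ℕ) (m : ℕ) : ℕ :=
  if hc : Nat.Coprime (MT h T) (CoT h lam T) then (Nat.chineseRemainder hc 1 m : ℕ) else 0

lemma hfac_eq {h : ℕ} (hh : h ≠ 0) : ∏ q ∈ h.primeFactors, q ^ h.factorization q = h := by
  have := Nat.factorization_prod_pow_eq_self hh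
  rw [Finsupp.prod] at this
  rwa [← Nat.support_factorization]

lemma MT_mul_CoT {h lam : ℕ} (hh : h ≠ 0) {T : Finset ℕ} (hT : T ⊆ h.primeFactors) :
    MT h T * CoT h lam T = h * lam := by
  unfold MT CoT
  calc (∏ q ∈ T, q ^ h.factorization q) * (lam * ∏ r ∈ h.primeFactors \ T, r ^ h.factorization r)
      = ((∏ r ∈ h.primeFactors \ T, r ^ h.factorization r) * ∏ q ∈ T, q ^ h.factorization q) * lam := by ring
    _ = (∏ q ∈ h.primeFactors, q ^ h.factorization q) * lam := by rw [Finset.prod_sdiff hT]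
    _ = h * lam := by rw [hfac_eq hh]

lemma prime_facts {p α lam h : ℕ} (hp : p.Prime) (hα : 1 ≤ α) (hlamdef : lam = p ^ α)
    (hh : 1 ≤ h) (hcop : Nat.Coprime h lam) {q : ℕ} (hq : q ∈ h.primeFactors) :
    q.Prime ∧ q ∣ h ∧ 1 ≤ h.factorization q ∧ Nat.Coprime q lam ∧ q ≠ p := by
  have hq' : q.Prime := Nat.prime_of_mem_primeFactors hq
  have hdvd : q ∣ h := Nat.dvd_of_mem_primeFactors hq
  have hcl : Nat.Coprime q lam := Nat.Coprime.coprime_dvd_left hdvd hcop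
  refine ⟨hq', hdvd, hq'.factorization_pos_of_dvd (by omega) hdvd, hcl, ?_⟩
  rintro rfl
  have : q ∣ lam := hlamdef ▸ dvd_pow_self q (by omega)
  have := Nat.gcd_eq_left this
  rw [Nat.Coprime] at hcl
  have := hq'.one_lt
  omega

lemma coprime_MT_CoT {p α lam h : ℕ} (hp : p.Prime) (hα : 1 ≤ α) (hlamdef : lam = p ^ α)
    (hh : 1 ≤ h) (hcop : Nat.Coprime h lam) {T : Finset ℕ} (hT : T ⊆ h.primeFactors) :
    Nat.Coprime (MT h T) (CoT h lam T) := by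
  apply Nat.Coprime.prod_left
  intro q hqT
  obtain ⟨hq, _, _, hql, _⟩ := prime_facts hp hα hlamdef hh hcop (hT hqT)
  apply Nat.Coprime.mul_right
  · exact Nat.Coprime.pow_left _ hql
  · apply Nat.Coprime.prod_right
    intro r hr
    obtain ⟨hrS, hrT⟩ := Finset.mem_sdiff.mp hr
    obtain ⟨hrp, _, _, _, _⟩ := prime_facts hp hα hlamdef hh hcop hrS
    exact Nat.coprime_pow_primes _ _ hq hrp (by rintro rfl; exact hrT hqT)

lemma liftT_spec {p α lam h : ℕ} (hp : p.Prime) (hα : 1 ≤ α) (hlamdef : lam = p ^ α)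
    (hh : 1 ≤ h) (hcop : Nat.Coprime h lam) {T : Finset ℕ} (hT : T ⊆ h.primeFactors) (m : ℕ) :
    LiftT h lam T m ≡ 1 [MOD MT h T] ∧ LiftT h lam T m ≡ m [MOD CoT h lam T] := by
  have hc := coprime_MT_CoT hp hα hlamdef hh hcop hT
  rw [LiftT, dif_pos hc]
  exact (Nat.chineseRemainder hc 1 m).2

lemma coprime_of_parts {z m₁ m₂ r₁ r₂ : ℕ} (h1 : z ≡ r₁ [MOD m₁]) (h2 : z ≡ r₂ [MOD m₂])
    (hc1 : Nat.Coprime r₁ m₁) (hc2 : Nat.Coprime r₂ m₂) : Nat.Coprime z (m₁ * m₂) := by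
  apply coprime_of_primes
  intro r hr hrz hrM
  rcases (Nat.Prime.dvd_mul hr).mp hrM with hd | hd
  · have : z ≡ r₁ [MOD r] := Nat.ModEq.of_dvd hd h1
    have hrr₁ : r ∣ r₁ := by
      have : r₁ ≡ 0 [MOD r] := (this.symm).trans ((Nat.modEq_zero_iff_dvd).mpr hrz)
      exact (Nat.modEq_zero_iff_dvd).mp this
    have hg : r ∣ Nat.gcd r₁ m₁ := Nat.dvd_gcd hrr₁ hd
    rw [hc1] at hg
    have := Nat.le_of_dvd one_pos hg
    have := hr.two_le
    omega
  · have : z ≡ r₂ [MOD r] := Nat.ModEq.of_dvd hd h2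
    have hrr₂ : r ∣ r₂ := by
      have : r₂ ≡ 0 [MOD r] := (this.symm).trans ((Nat.modEq_zero_iff_dvd).mpr hrz)
      exact (Nat.modEq_zero_iff_dvd).mp this
    have hg : r ∣ Nat.gcd r₂ m₂ := Nat.dvd_gcd hrr₂ hd
    rw [hc2] at hg
    have := Nat.le_of_dvd one_pos hg
    have := hr.two_le
    omega

lemma split (p α lam h : ℕ) (hp : p.Prime) (hα : 1 ≤ α) (hlamdef : lam = p ^ α)
    (hh : 1 ≤ h) (a : ℕ → ℂ) (ha : IsMultiplicativeSeq a) (χ : ℕ → ℂ)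
    (haχ : ∀ n : ℕ, 1 ≤ n → Nat.Coprime n (h * lam) → a n = χ n)
    (n : ℕ) (hn : n ≠ 0) (hpn : ¬ p ∣ n) :
    a n = (∏ q ∈ h.primeFactors, a (q ^ n.factorization q)) *
        χ (n / RadPart h.primeFactors n) ∧
      RadPart h.primeFactors n ∣ n ∧ n / RadPart h.primeFactors n ≠ 0 ∧
      Nat.Coprime (n / RadPart h.primeFactors n) (h * lam) := by
  obtain ⟨h1, h2, h3, h4, h5⟩ :=
    msplit a ha h.primeFactors (fun q hq => Nat.prime_of_mem_primeFactors hq) n hn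
  have hcopr : Nat.Coprime (n / RadPart h.primeFactors n) (h * lam) := by
    apply coprime_of_primes
    intro r hr hrx hrM
    rcases (Nat.Prime.dvd_mul hr).mp hrM with hrh | hrlam
    · exact h4 r (Nat.mem_primeFactors.mpr ⟨hr, hrh, by omega⟩) hrx
    · have hrp : r = p := by
        rw [hlamdef] at hrlam
        exact (Nat.prime_dvd_prime_iff_eq hr hp).mp (hr.dvd_of_dvd_pow hrlam)
      exact hpn (hrp ▸ dvd_trans hrx h3)
  exact ⟨by rw [h5, haχ _ (Nat.one_le_iff_ne_zero.mpr h2) hcopr], h1, h2, hcopr⟩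

lemma radpart_pos {F : Finset ℕ} (hF : ∀ q ∈ F, Nat.Prime q) (n : ℕ) :
    RadPart F n ≠ 0 := by
  have : 0 < RadPart F n := by
    unfold RadPart
    apply Finset.prod_pos
    intro q hq
    exact pow_pos (hF q hq).pos _
  omega

lemma cong (p α lam h : ℕ) (hp : p.Prime) (hα : 1 ≤ α) (hlamdef : lam = p ^ α)
    (hh : 1 ≤ h) (a : ℕ → ℂ) (ha : IsMultiplicativeSeq a) (χ : ℕ → ℂ)
    (hχ : IsDirichletCharacterSeq (h * lam) χ)
    (haχ : ∀ n : ℕ, 1 ≤ n → Nat.Coprime n (h * lam) → a n = χ n)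
    (y y' : ℕ) (hy : y ≠ 0) (hy' : y' ≠ 0) (hpy : ¬ p ∣ y) (hpy' : ¬ p ∣ y')
    (hfac : ∀ q ∈ h.primeFactors, y.factorization q = y'.factorization q)
    (hmod : y ≡ y' [MOD (h * lam) * RadPart h.primeFactors y]) : a y = a y' := by
  obtain ⟨e1, d1, n1, c1⟩ := split p α lam h hp hα hlamdef hh a ha χ haχ y hy hpy
  obtain ⟨e2, d2, n2, c2⟩ := split p α lam h hp hα hlamdef hh a ha χ haχ y' hy' hpy'
  have hR : RadPart h.primeFactors y = RadPart h.primeFactors y' :=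
    Finset.prod_congr rfl fun q hq => by rw [hfac q hq]
  have hprodeq : (∏ q ∈ h.primeFactors, a (q ^ y.factorization q)) =
      ∏ q ∈ h.primeFactors, a (q ^ y'.factorization q) :=
    Finset.prod_congr rfl fun q hq => by rw [hfac q hq]
  have hP0 : RadPart h.primeFactors y ≠ 0 :=
    radpart_pos (fun q hq => Nat.prime_of_mem_primeFactors hq) y
  have hcore : y / RadPart h.primeFactors y ≡ y' / RadPart h.primeFactors y [MOD h * lam] := by
    apply modeq_div hP0 d1 (hR ▸ d2)
    rwa [mul_comm] at hmod
  rw [e1, e2, hprodeq, ← hR]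
  rw [chi_congr hχ.1 hcore]

lemma pump2 {lam : ℕ} (hlam2 : 2 ≤ lam) {a : ℕ → ℂ} (haut : IsAutomatic lam a) :
    ∃ i₁ I, 1 ≤ i₁ ∧ 1 ≤ I ∧ ∀ x : ℕ, x ≡ Rep lam i₁ [MOD lam ^ i₁] →
      a x = a (lam ^ I * x + Rep lam I) := by
  obtain ⟨i₁, i₂, h1, hlt, heq⟩ := pigeon haut (fun i => fun n => a (lam ^ i * n + Rep lam i))
    (fun i _ => ⟨i, Rep lam i, rep_lt hlam2 i, rfl⟩)
  refine ⟨i₁, i₂ - i₁, h1, by omega, ?_⟩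
  intro x hx
  obtain ⟨n, rfl⟩ := exists_rep (rep_lt hlam2 i₁) hx
  have h2 := congrFun heq n
  have key : ∀ m k : ℕ, lam ^ (m + k) * n + Rep lam (m + k)
      = lam ^ m * (lam ^ k * n + Rep lam k) + Rep lam m := by
    intro m k
    rw [rep_add lam m k, pow_add]
    ring
  have hi₂ : i₂ = (i₂ - i₁) + i₁ := by omega
  rw [hi₂] at h2
  rw [key (i₂ - i₁) i₁] at h2
  exact h2

lemma dvd_trans_modeq {r m x y : ℕ} (hrm : r ∣ m) (h : x ≡ y [MOD m]) (hrx : r ∣ x) :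
    r ∣ y := by
  have h1 : x ≡ y [MOD r] := Nat.ModEq.of_dvd hrm h
  exact (Nat.modEq_zero_iff_dvd).mp (h1.symm.trans ((Nat.modEq_zero_iff_dvd).mpr hrx))

lemma keyq (p α lam h : ℕ) (hp : p.Prime) (hα : 1 ≤ α) (hlamdef : lam = p ^ α)
    (hh : 1 ≤ h) (hcop : Nat.Coprime h lam)
    (a : ℕ → ℂ) (haut : IsAutomatic lam a) (ha : IsMultiplicativeSeq a)
    (χ : ℕ → ℂ) (hχ : IsDirichletCharacterSeq (h * lam) χ)
    (haχ : ∀ n : ℕ, 1 ≤ n → Nat.Coprime n (h * lam) → a n = χ n)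
    (q : ℕ) (hqS : q ∈ h.primeFactors) :
    ∃ B, 1 ≤ B ∧
      ((∀ e, B ≤ e → a (q ^ e) = 0) ∨
       ((∀ w, w ≡ 1 [MOD CoT h lam {q}] → Nat.Coprime w (h * lam) → χ w = 1) ∧
        (∀ e, B ≤ e → a (q ^ e) ≠ 0 ∧
          a (q ^ (e + 1)) = χ (LiftT h lam {q} q) * a (q ^ e)))) := by
  classical
  obtain ⟨hq, hqh, hγ1, hqlam, hqp⟩ := prime_facts hp hα hlamdef hh hcop hqS
  have hh0 : h ≠ 0 := by omega
  have hplam : p ∣ lam := hlamdef ▸ dvd_pow_self p (by omega)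
  have hlam2 : 2 ≤ lam := by
    have h1 : p ≤ lam := hlamdef ▸ Nat.le_self_pow (by omega) p
    have := hp.two_le; omega
  set S' := h.primeFactors.erase q with hS'
  set γ := h.factorization q with hγ
  have hγpos : 1 ≤ γ := hγ1
  obtain ⟨i₁, I, hi₁, hI, ID⟩ := pump2 hlam2 haut
  set A := lam ^ i₁ with hA
  set R := Rep lam i₁ with hRdef
  set c₁ := lam ^ I with hc₁
  set c₂ := Rep lam I with hc₂
  obtain ⟨tR, htR⟩ := rep_eq_one_add (lam := lam) hi₁
  obtain ⟨tc, htc⟩ := rep_eq_one_add (lam := lam) hI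
  have hc₂0 : c₂ ≠ 0 := by rw [hc₂, htc]; omega
  have hc₁0 : c₁ ≠ 0 := pow_ne_zero _ (by omega)
  have hcc0 : c₁ + c₂ ≠ 0 := by
    intro hcon; rw [Nat.add_eq_zero] at hcon; exact hc₁0 hcon.1
  set β := c₂.factorization q with hβ
  set B := β + γ + 1 with hB
  set K : ℕ → ℕ := fun r => (c₁ + c₂).factorization r + h.factorization r + 1 with hK
  set N := ∏ r ∈ S', r ^ K r with hN
  have hq1 : ¬ q ∣ 1 := hq.not_dvd_one
  have hS'facts : ∀ r ∈ S', r.Prime ∧ r ≠ q ∧ Nat.Coprime r lam ∧ Nat.Coprime q r := by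
    intro r hr
    obtain ⟨hrq, hrS⟩ := Finset.mem_erase.mp hr
    obtain ⟨hrp, hrh, _, hrl, _⟩ := prime_facts hp hα hlamdef hh hcop hrS
    exact ⟨hrp, hrq, hrl, (Nat.coprime_primes hq hrp).mpr (Ne.symm hrq)⟩
  have hcopAq : ∀ E : ℕ, Nat.Coprime A (q ^ E) := fun E => Nat.Coprime.pow _ _ hqlam.symm
  have hcopAN : Nat.Coprime A N := by
    apply Nat.Coprime.prod_right
    intro r hr
    exact Nat.Coprime.pow _ _ ((hS'facts r hr).2.2.1).symm
  have hcopqN : ∀ E : ℕ, Nat.Coprime (q ^ E) N := by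
    intro E
    apply Nat.Coprime.prod_right
    intro r hr
    exact Nat.Coprime.pow _ _ (hS'facts r hr).2.2.2
  have hcoplamN : Nat.Coprime lam N := by
    apply Nat.Coprime.prod_right
    intro r hr
    exact Nat.Coprime.pow_right _ ((hS'facts r hr).2.2.1).symm
  have hKne : ∀ r, K r ≠ 0 := by intro r; simp only [hK]; omega
  -- construction of test numbers
  have build : ∀ e w, B ≤ e → ¬ q ∣ w →
      ∃ x x' : ℕ, x ≡ R [MOD A] ∧ x ≡ 1 [MOD lam * N] ∧ x = q ^ e * x' ∧
        x' ≡ w [MOD q ^ (γ + 1)] ∧ Nat.Coprime x' (h * lam) ∧ x' ≠ 0 ∧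
        a x = a (q ^ e) * χ x' := by
    intro e w he hw
    obtain ⟨x, hx1, hx2, hx3⟩ := crt3 (m₁ := A) (m₂ := q ^ (e + (γ + 1))) (m₃ := N)
      (hcopAq _) hcopAN (hcopqN _) R (q ^ e * w) 1
    have hxlam : x ≡ 1 [MOD lam] := by
      have h1 : x ≡ R [MOD lam] := Nat.ModEq.of_dvd (hA ▸ dvd_pow_self lam (by omega)) hx1
      have h2 : R ≡ 1 [MOD lam] := by
        rw [hRdef, htR]
        exact ((Nat.modEq_iff_dvd' (by omega)).mpr ⟨tR, by omega⟩).symm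
      exact h1.trans h2
    have hxlamN : x ≡ 1 [MOD lam * N] :=
      (Nat.modEq_and_modEq_iff_modEq_mul hcoplamN).mp ⟨hxlam, hx3⟩
    have hx0 : x ≠ 0 := by
      intro h0
      have h1 : x % lam = 1 % lam := hxlam
      rw [h0, Nat.zero_mod, Nat.mod_eq_of_lt (by omega : 1 < lam)] at h1
      omega
    have hqe : q ^ e ∣ x := by
      have h1 : x ≡ q ^ e * w [MOD q ^ e] :=
        Nat.ModEq.of_dvd (pow_dvd_pow q (by omega)) hx2
      have h2 : q ^ e * w ≡ 0 [MOD q ^ e] := (Nat.modEq_zero_iff_dvd).mpr (dvd_mul_right _ _)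
      exact (Nat.modEq_zero_iff_dvd).mp (h1.trans h2)
    have hxeq : x = q ^ e * (x / q ^ e) := (Nat.mul_div_cancel' hqe).symm
    set x' := x / q ^ e with hx'def
    have hx'w : x' ≡ w [MOD q ^ (γ + 1)] := by
      apply Nat.ModEq.mul_left_cancel' (c := q ^ e) (pow_ne_zero _ hq.pos.ne')
      rw [← hxeq, ← pow_add]
      exact hx2
    have hx'0 : x' ≠ 0 := by
      intro h0
      rw [h0, mul_zero] at hxeq
      exact hx0 hxeq
    have hqx' : ¬ q ∣ x' := by
      intro hd
      have h1 : x' ≡ w [MOD q] := Nat.ModEq.of_dvd (dvd_pow_self q (by omega)) hx'w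
      exact hw (dvd_trans_modeq (dvd_refl q) h1 hd)
    have hx'x : x' ∣ x := ⟨q ^ e, by rw [hxeq]; ring⟩
    have hpx : ¬ p ∣ x := by
      intro hd
      have h1 : p ∣ 1 := dvd_trans_modeq hplam hxlam hd
      have h2 := Nat.le_of_dvd one_pos h1
      have := hp.two_le
      omega
    have hx'cop : Nat.Coprime x' (h * lam) := by
      apply coprime_of_primes
      intro r hr hrx' hrM
      rcases (Nat.Prime.dvd_mul hr).mp hrM with hrh | hrlam
      · by_cases hrq : r = q
        · exact hqx' (hrq ▸ hrx')
        · have hrS' : r ∈ S' := Finset.mem_erase.mpr ⟨hrq, Nat.mem_primeFactors.mpr ⟨hr, hrh, hh0⟩⟩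
          have hrN : r ∣ N :=
            dvd_trans (dvd_pow_self r (hKne r)) (Finset.dvd_prod_of_mem (fun r => r ^ K r) hrS')
          have : r ∣ 1 := dvd_trans_modeq hrN hx3 (dvd_trans hrx' hx'x)
          have := Nat.le_of_dvd one_pos this
          have := hr.two_le
          omega
      · have hrp : r = p :=
          (Nat.prime_dvd_prime_iff_eq hr hp).mp (hr.dvd_of_dvd_pow (hlamdef ▸ hrlam))
        exact hpx (hrp ▸ dvd_trans hrx' hx'x)
    have hax : a x = a (q ^ e) * χ x' := by
      conv_lhs => rw [hxeq]
      rw [ha.2 _ _ (Nat.one_le_iff_ne_zero.mpr (pow_ne_zero _ hq.pos.ne'))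
        (Nat.one_le_iff_ne_zero.mpr hx'0)
        (Nat.Coprime.pow_left _ ((hq.coprime_iff_not_dvd).mpr hqx'))]
      rw [haχ x' (Nat.one_le_iff_ne_zero.mpr hx'0) hx'cop]
    exact ⟨x, x', hx1, hxlamN, hxeq, hx'w, hx'cop, hx'0, hax⟩
  -- facts about y = c₁ x + c₂
  have yfacts : ∀ e x x', B ≤ e → x ≡ 1 [MOD lam * N] → x = q ^ e * x' →
      (c₁ * x + c₂ ≠ 0) ∧ ¬ p ∣ (c₁ * x + c₂) ∧
      (c₁ * x + c₂) ≡ c₂ [MOD q ^ (β + γ + 1)] ∧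
      (∀ r ∈ S', (c₁ * x + c₂) ≡ c₁ + c₂ [MOD r ^ K r]) ∧
      (c₁ * x + c₂) ≡ 1 [MOD lam] ∧
      (c₁ * x + c₂).factorization q = β ∧
      (∀ r ∈ S', (c₁ * x + c₂).factorization r = (c₁ + c₂).factorization r) := by
    intro e x x' he hx2 hxeq
    have hy0 : c₁ * x + c₂ ≠ 0 := by
      have : c₂ ≠ 0 := hc₂0
      omega
    have hyq : (c₁ * x + c₂) ≡ c₂ [MOD q ^ (β + γ + 1)] := by
      have hdq : q ^ (β + γ + 1) ∣ c₁ * x := by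
        apply dvd_mul_of_dvd_right
        exact dvd_trans (pow_dvd_pow q (by omega : β + γ + 1 ≤ e)) (hxeq ▸ dvd_mul_right _ _)
      have h1 : c₁ * x ≡ 0 [MOD q ^ (β + γ + 1)] := (Nat.modEq_zero_iff_dvd).mpr hdq
      simpa using h1.add_right c₂
    have hyr : ∀ r ∈ S', (c₁ * x + c₂) ≡ c₁ + c₂ [MOD r ^ K r] := by
      intro r hr
      have hxN : x ≡ 1 [MOD N] := Nat.ModEq.of_mul_left lam hx2
      have hxr : x ≡ 1 [MOD r ^ K r] :=
        Nat.ModEq.of_dvd (Finset.dvd_prod_of_mem (fun r => r ^ K r) hr) hxN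
      have := (Nat.ModEq.mul_left c₁ hxr).add_right c₂
      simpa using this
    have hylam : (c₁ * x + c₂) ≡ 1 [MOD lam] := by
      have h1 : c₁ * x ≡ 0 [MOD lam] := by
        apply (Nat.modEq_zero_iff_dvd).mpr
        exact dvd_mul_of_dvd_left (hc₁ ▸ dvd_pow_self lam (by omega)) x
      have h2 : c₂ ≡ 1 [MOD lam] := by
        rw [hc₂, htc]
        exact ((Nat.modEq_iff_dvd' (by omega)).mpr ⟨tc, by omega⟩).symm
      have := h1.add h2
      simpa using this
    have hpy : ¬ p ∣ (c₁ * x + c₂) := by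
      intro hd
      have h1 : p ∣ 1 := dvd_trans_modeq hplam hylam hd
      have h2 := Nat.le_of_dvd one_pos h1
      have := hp.two_le
      omega
    refine ⟨hy0, hpy, hyq, hyr, hylam, ?_, ?_⟩
    · have := fact_eq_of_modeq hq hy0 hc₂0 (by rw [← hβ]; omega) hyq
      rw [this, ← hβ]
    · intro r hr
      exact fact_eq_of_modeq (hS'facts r hr).1 hy0 hcc0 (by simp only [hK]; omega) (hyr r hr)
  -- base instance
  obtain ⟨x₀, x'₀, hb1, hb2, hb3, hb4, hb5, hb6, hb7⟩ := build B 1 le_rfl hq1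
  obtain ⟨hy0₀, hpy₀, hyq₀, hyr₀, hylam₀, hfq₀, hfr₀⟩ := yfacts B x₀ x'₀ le_rfl hb2 hb3
  set κ := a (c₁ * x₀ + c₂) with hκdef
  have hsplit_h : q ^ γ * ∏ r ∈ S', r ^ h.factorization r = h := by
    rw [hγ, hS']
    rw [Finset.mul_prod_erase _ (fun r => r ^ h.factorization r) hqS]
    exact hfac_eq hh0
  have master : ∀ e w, B ≤ e → ¬ q ∣ w →
      ∃ x', x' ≡ w [MOD q ^ (γ + 1)] ∧ Nat.Coprime x' (h * lam) ∧ x' ≠ 0 ∧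
        q ^ e * x' ≡ 1 [MOD lam * N] ∧ a (q ^ e) * χ x' = κ := by
    intro e w he hw
    obtain ⟨x, x', h1, h2, h3, h4, h5, h6, h7⟩ := build e w he hw
    obtain ⟨hy0, hpy, hyq, hyr, hylam, hfq, hfr⟩ := yfacts e x x' he h2 h3
    refine ⟨x', h4, h5, h6, h3 ▸ h2, ?_⟩
    rw [← h7, ID x h1, hκdef]
    -- a (c₁ x + c₂) = a (c₁ x₀ + c₂)
    apply cong p α lam h hp hα hlamdef hh a ha χ hχ haχ _ _ hy0 hy0₀ hpy hpy₀
    · intro r hrS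
      by_cases hrq : r = q
      · subst hrq; rw [hfq, hfq₀]
      · have hrS' : r ∈ S' := Finset.mem_erase.mpr ⟨hrq, hrS⟩
        rw [hfr r hrS', hfr₀ r hrS']
    · -- congruence mod (h*lam) * RadPart
      have hRP : RadPart h.primeFactors (c₁ * x + c₂)
          = q ^ β * ∏ r ∈ S', r ^ (c₁ + c₂).factorization r := by
        unfold RadPart
        rw [← Finset.mul_prod_erase _ _ hqS, hfq, ← hS']
        congr 1
        exact Finset.prod_congr rfl (fun r hr => by rw [hfr r hr])
      have hPP : (∏ r ∈ S', r ^ h.factorization r) * (∏ r ∈ S', r ^ (c₁ + c₂).factorization r)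
          = ∏ r ∈ S', r ^ (h.factorization r + (c₁ + c₂).factorization r) := by
        rw [← Finset.prod_mul_distrib]
        exact Finset.prod_congr rfl (fun r _ => (pow_add r _ _).symm)
      have hmodulus : (h * lam) * RadPart h.primeFactors (c₁ * x + c₂)
          = lam * (q ^ (γ + β) *
            ∏ r ∈ S', r ^ (h.factorization r + (c₁ + c₂).factorization r)) := by
        rw [hRP, ← hPP]
        calc (h * lam) * (q ^ β * ∏ r ∈ S', r ^ (c₁ + c₂).factorization r)
            = ((q ^ γ * ∏ r ∈ S', r ^ h.factorization r) * lam) *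
              (q ^ β * ∏ r ∈ S', r ^ (c₁ + c₂).factorization r) := by rw [hsplit_h]
          _ = lam * (q ^ (γ + β) * ((∏ r ∈ S', r ^ h.factorization r) *
              ∏ r ∈ S', r ^ (c₁ + c₂).factorization r)) := by rw [pow_add]; ring
      rw [hmodulus]
      have m1 : (c₁ * x + c₂) ≡ (c₁ * x₀ + c₂) [MOD lam] := hylam.trans hylam₀.symm
      have m2 : (c₁ * x + c₂) ≡ (c₁ * x₀ + c₂) [MOD q ^ (γ + β)] :=
        (Nat.ModEq.of_dvd (pow_dvd_pow q (by omega)) hyq).trans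
          (Nat.ModEq.of_dvd (pow_dvd_pow q (by omega)) hyq₀).symm
      have m3 : ∀ r ∈ S', (c₁ * x + c₂) ≡ (c₁ * x₀ + c₂)
          [MOD r ^ (h.factorization r + (c₁ + c₂).factorization r)] := by
        intro r hr
        have hd : r ^ (h.factorization r + (c₁ + c₂).factorization r) ∣ r ^ K r :=
          pow_dvd_pow r (by simp only [hK]; omega)
        exact (Nat.ModEq.of_dvd hd (hyr r hr)).trans (Nat.ModEq.of_dvd hd (hyr₀ r hr)).symm
      have m4 : (c₁ * x + c₂) ≡ (c₁ * x₀ + c₂)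
          [MOD ∏ r ∈ S', r ^ (h.factorization r + (c₁ + c₂).factorization r)] := by
        apply modeq_prod _ S' ?_ m3
        intro i hi j hj hij
        exact Nat.coprime_pow_primes _ _ (hS'facts i hi).1 (hS'facts j hj).1 hij
      have m5 : Nat.Coprime (q ^ (γ + β))
          (∏ r ∈ S', r ^ (h.factorization r + (c₁ + c₂).factorization r)) := by
        apply Nat.Coprime.prod_right
        intro r hr
        exact Nat.Coprime.pow _ _ (hS'facts r hr).2.2.2
      have m6 := (Nat.modEq_and_modEq_iff_modEq_mul m5).mp ⟨m2, m4⟩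
      have m7 : Nat.Coprime lam (q ^ (γ + β) *
          ∏ r ∈ S', r ^ (h.factorization r + (c₁ + c₂).factorization r)) := by
        apply Nat.Coprime.mul_right
        · exact Nat.Coprime.pow_right _ hqlam.symm
        · apply Nat.Coprime.prod_right
          intro r hr
          exact Nat.Coprime.pow_right _ ((hS'facts r hr).2.2.1).symm
      exact (Nat.modEq_and_modEq_iff_modEq_mul m7).mp ⟨m1, m6⟩
  have hκval : κ = a (q ^ B) * χ x'₀ := by rw [hκdef, ← ID x₀ hb1, hb7]
  by_cases h0 : a (q ^ B) = 0
  · refine ⟨B, by omega, Or.inl ?_⟩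
    intro e he
    obtain ⟨x', _, hcopx', _, _, heq⟩ := master e 1 he hq1
    rw [hκval, h0, zero_mul] at heq
    exact (mul_eq_zero.mp heq).resolve_right (chi_ne hχ hcopx')
  · have hκ0 : κ ≠ 0 := by
      rw [hκval]; exact mul_ne_zero h0 (chi_ne hχ hb5)
    have ane : ∀ e, B ≤ e → a (q ^ e) ≠ 0 := by
      intro e he
      obtain ⟨x', _, hcx', _, _, heq⟩ := master e 1 he hq1
      intro h00; rw [h00, zero_mul] at heq; exact hκ0 heq.symm
    set Co := CoT h lam {q} with hCodef
    have hCoval : Co = lam * ∏ r ∈ S', r ^ h.factorization r := by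
      rw [hCodef]; unfold CoT; rw [Finset.sdiff_singleton_eq_erase, ← hS']
    have hqsub : ({q} : Finset ℕ) ⊆ h.primeFactors := by
      intro z hz; rw [Finset.mem_singleton] at hz; rwa [hz]
    have hMq : MT h {q} = q ^ γ := by unfold MT; rw [Finset.prod_singleton, hγ]
    have hMeq : q ^ γ * Co = h * lam := by
      rw [← hMq, hCodef]; exact MT_mul_CoT hh0 hqsub
    have hcopqCo : Nat.Coprime (q ^ γ) Co := by
      rw [← hMq, hCodef]; exact coprime_MT_CoT hp hα hlamdef hh hcop hqsub
    have hqCo : Nat.Coprime q Co := by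
      rw [hCoval]
      apply Nat.Coprime.mul_right hqlam
      apply Nat.Coprime.prod_right
      intro r hr
      exact Nat.Coprime.pow_right _ (hS'facts r hr).2.2.2
    have hCodvd : Co ∣ lam * N := by
      rw [hCoval, hN]
      apply mul_dvd_mul_left lam
      apply Finset.prod_dvd_prod_of_dvd
      intro r hr
      exact pow_dvd_pow r (by simp only [hK]; omega)
    have btriv : ∀ w, w ≡ 1 [MOD Co] → Nat.Coprime w (h * lam) → χ w = 1 := by
      intro w hwmod hwcop
      have hqw : ¬ q ∣ w := by
        intro hd
        have hqM : q ∣ h * lam := dvd_mul_of_dvd_left hqh lam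
        have hg : q ∣ Nat.gcd w (h * lam) := Nat.dvd_gcd hd hqM
        rw [hwcop] at hg
        have := Nat.le_of_dvd one_pos hg
        have := hq.two_le
        omega
      obtain ⟨xw, hw1, hw2, hw3, hw4, hw5⟩ := master B w le_rfl hqw
      obtain ⟨x1, h11, h12, h13, h14, h15⟩ := master B 1 le_rfl hq1
      have hchieq : χ xw = χ x1 :=
        mul_left_cancel₀ (ane B le_rfl) (hw5.trans h15.symm)
      have c1 : w * x1 ≡ xw [MOD q ^ γ] := by
        have e1 : xw ≡ w [MOD q ^ γ] := Nat.ModEq.of_dvd (pow_dvd_pow q (by omega)) hw1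
        have e2 : x1 ≡ 1 [MOD q ^ γ] := Nat.ModEq.of_dvd (pow_dvd_pow q (by omega)) h11
        calc w * x1 ≡ w * 1 [MOD q ^ γ] := Nat.ModEq.mul_left w e2
          _ = w := mul_one w
          _ ≡ xw [MOD q ^ γ] := e1.symm
      have c2 : w * x1 ≡ xw [MOD Co] := by
        have e1 : q ^ B * xw ≡ q ^ B * x1 [MOD Co] :=
          (Nat.ModEq.of_dvd hCodvd hw4).trans (Nat.ModEq.of_dvd hCodvd h14).symm
        have e2 : xw ≡ x1 [MOD Co] :=
          Nat.ModEq.cancel_left_of_coprime ((hqCo.pow_left B).symm) e1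
        calc w * x1 ≡ 1 * x1 [MOD Co] := Nat.ModEq.mul_right x1 hwmod
          _ = x1 := one_mul x1
          _ ≡ xw [MOD Co] := e2.symm
      have cc : w * x1 ≡ xw [MOD h * lam] := by
        rw [← hMeq]
        exact (Nat.modEq_and_modEq_iff_modEq_mul hcopqCo).mp ⟨c1, c2⟩
      have hchi : χ w * χ x1 = χ xw := by
        rw [← hχ.2.1]; exact chi_congr hχ.1 cc
      rw [hchieq] at hchi
      have : χ w * χ x1 = 1 * χ x1 := by rw [hchi, one_mul]
      exact mul_right_cancel₀ (chi_ne hχ h12) this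
    have hLspec := liftT_spec hp hα hlamdef hh hcop (T := {q}) hqsub q
    have hL1 : LiftT h lam {q} q ≡ 1 [MOD q ^ γ] := by rw [← hMq]; exact hLspec.1
    have hL2 : LiftT h lam {q} q ≡ q [MOD Co] := hLspec.2
    have recur : ∀ e, B ≤ e → a (q ^ (e + 1)) = χ (LiftT h lam {q} q) * a (q ^ e) := by
      intro e he
      obtain ⟨xe, he1, he2, he3, he4, he5⟩ := master e 1 he hq1
      obtain ⟨xe1, hf1, hf2, hf3, hf4, hf5⟩ := master (e + 1) 1 (by omega) hq1
      have c1 : LiftT h lam {q} q * xe1 ≡ xe [MOD q ^ γ] := by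
        have e1 : xe ≡ 1 [MOD q ^ γ] := Nat.ModEq.of_dvd (pow_dvd_pow q (by omega)) he1
        have e2 : xe1 ≡ 1 [MOD q ^ γ] := Nat.ModEq.of_dvd (pow_dvd_pow q (by omega)) hf1
        calc LiftT h lam {q} q * xe1 ≡ 1 * 1 [MOD q ^ γ] := hL1.mul e2
          _ = 1 := one_mul 1
          _ ≡ xe [MOD q ^ γ] := e1.symm
      have c2 : LiftT h lam {q} q * xe1 ≡ xe [MOD Co] := by
        have t1 : q ^ (e + 1) * xe1 ≡ q ^ e * xe [MOD Co] :=
          (Nat.ModEq.of_dvd hCodvd hf4).trans (Nat.ModEq.of_dvd hCodvd he4).symm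
        have t2 : q ^ e * (q * xe1) ≡ q ^ e * xe [MOD Co] := by
          have : q ^ e * (q * xe1) = q ^ (e + 1) * xe1 := by rw [pow_succ]; ring
          rw [this]; exact t1
        have e2 : q * xe1 ≡ xe [MOD Co] :=
          Nat.ModEq.cancel_left_of_coprime ((hqCo.pow_left e).symm) t2
        calc LiftT h lam {q} q * xe1 ≡ q * xe1 [MOD Co] := Nat.ModEq.mul_right xe1 hL2
          _ ≡ xe [MOD Co] := e2
      have cc : LiftT h lam {q} q * xe1 ≡ xe [MOD h * lam] := by
        rw [← hMeq]
        exact (Nat.modEq_and_modEq_iff_modEq_mul hcopqCo).mp ⟨c1, c2⟩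
      have hchi : χ (LiftT h lam {q} q) * χ xe1 = χ xe := by
        rw [← hχ.2.1]; exact chi_congr hχ.1 cc
      have heq2 : a (q ^ (e + 1)) * χ xe1 = a (q ^ e) * χ xe := hf5.trans he5.symm
      rw [← hchi] at heq2
      apply mul_right_cancel₀ (chi_ne hχ hf2)
      rw [heq2]; ring
    exact ⟨B, by omega, Or.inr ⟨btriv, fun e he => ⟨ane e he, recur e he⟩⟩⟩

lemma wprime (p α lam h : ℕ) (hp : p.Prime) (hα : 1 ≤ α) (hlamdef : lam = p ^ α)
    (hh : 1 ≤ h) (hcop : Nat.Coprime h lam)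
    (χ : ℕ → ℂ) (hχ : IsDirichletCharacterSeq (h * lam) χ) :
    ∀ T : Finset ℕ, T ⊆ h.primeFactors →
      (∀ q ∈ T, ∀ w, w ≡ 1 [MOD CoT h lam {q}] → Nat.Coprime w (h * lam) → χ w = 1) →
      ∀ w, w ≡ 1 [MOD CoT h lam T] → Nat.Coprime w (h * lam) → χ w = 1 := by
  have hh0 : h ≠ 0 := by omega
  intro T
  induction T using Finset.induction_on with
  | empty =>
      intro _ _ w hw hwc
      have hCo : CoT h lam ∅ = lam * h := by
        unfold CoT; rw [Finset.sdiff_empty, hfac_eq hh0]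
      rw [hCo] at hw
      have hw' : w ≡ 1 [MOD h * lam] := by rwa [mul_comm] at hw
      rw [chi_congr hχ.1 hw']
      exact chi_one hχ
  | @insert q T' hqT' ih =>
      intro hsub htriv w hw hwc
      have hqS : q ∈ h.primeFactors := hsub (Finset.mem_insert_self _ _)
      have hT'sub : T' ⊆ h.primeFactors := fun z hz => hsub (Finset.mem_insert_of_mem hz)
      obtain ⟨hq, hqh, hγ1, hqlam, hqp⟩ := prime_facts hp hα hlamdef hh hcop hqS
      set γ := h.factorization q with hγ
      have hqsub : ({q} : Finset ℕ) ⊆ h.primeFactors := by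
        intro z hz; rw [Finset.mem_singleton] at hz; rwa [hz]
      have hMq : MT h {q} = q ^ γ := by unfold MT; rw [Finset.prod_singleton, hγ]
      have hMeq : q ^ γ * CoT h lam {q} = h * lam := by
        rw [← hMq]; exact MT_mul_CoT hh0 hqsub
      have hcopqCo : Nat.Coprime (q ^ γ) (CoT h lam {q}) := by
        rw [← hMq]; exact coprime_MT_CoT hp hα hlamdef hh hcop hqsub
      have hCoqdvd : CoT h lam (insert q T') ∣ CoT h lam {q} := by
        unfold CoT
        apply mul_dvd_mul_left
        apply Finset.prod_dvd_prod_of_subset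
        apply Finset.sdiff_subset_sdiff (Finset.Subset.refl _)
        intro z hz
        rw [Finset.mem_singleton] at hz
        rw [hz]; exact Finset.mem_insert_self _ _
      have hcopqCoT : Nat.Coprime (q ^ γ) (CoT h lam (insert q T')) :=
        Nat.Coprime.coprime_dvd_right hCoqdvd hcopqCo
      have hCoT' : CoT h lam T' = q ^ γ * CoT h lam (insert q T') := by
        unfold CoT
        have h1 : q ∈ h.primeFactors \ T' := Finset.mem_sdiff.mpr ⟨hqS, hqT'⟩
        have h2 : h.primeFactors \ insert q T' = (h.primeFactors \ T').erase q := by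
          rw [Finset.sdiff_insert]
        rw [h2, ← Finset.mul_prod_erase _ _ h1, hγ]
        ring
      obtain ⟨w₁, hw11, hw12⟩ := Nat.chineseRemainder hcopqCo w 1
      obtain ⟨w₂, hw21, hw22⟩ := Nat.chineseRemainder hcopqCo 1 w
      have hwcopq : Nat.Coprime w (q ^ γ) :=
        Nat.Coprime.coprime_dvd_right ⟨CoT h lam {q}, hMeq.symm⟩ hwc
      have hwCoT : Nat.Coprime w (CoT h lam {q}) :=
        Nat.Coprime.coprime_dvd_right ⟨q ^ γ, by rw [← hMeq]; ring⟩ hwc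
      have d1 : w₁ * w₂ ≡ w [MOD q ^ γ] := by
        calc w₁ * w₂ ≡ w * 1 [MOD q ^ γ] := hw11.mul hw21
          _ = w := mul_one w
      have d2 : w₁ * w₂ ≡ w [MOD CoT h lam {q}] := by
        calc w₁ * w₂ ≡ 1 * w [MOD CoT h lam {q}] := hw12.mul hw22
          _ = w := one_mul w
      have dd : w₁ * w₂ ≡ w [MOD h * lam] := by
        rw [← hMeq]
        exact (Nat.modEq_and_modEq_iff_modEq_mul hcopqCo).mp ⟨d1, d2⟩
      have hw₁cop : Nat.Coprime w₁ (h * lam) := by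
        rw [← hMeq]
        exact coprime_of_parts hw11 hw12 hwcopq (Nat.coprime_one_left _)
      have hw₂cop : Nat.Coprime w₂ (h * lam) := by
        rw [← hMeq]
        exact coprime_of_parts hw21 hw22 (Nat.coprime_one_left _) hwCoT
      have hχw₁ : χ w₁ = 1 := htriv q (Finset.mem_insert_self _ _) w₁ hw12 hw₁cop
      have hw₂1 : w₂ ≡ 1 [MOD CoT h lam T'] := by
        rw [hCoT']
        apply (Nat.modEq_and_modEq_iff_modEq_mul hcopqCoT).mp
        exact ⟨hw21, (Nat.ModEq.of_dvd hCoqdvd hw22).trans hw⟩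
      have hχw₂ : χ w₂ = 1 :=
        ih hT'sub (fun q' hq' => htriv q' (Finset.mem_insert_of_mem hq')) w₂ hw₂1 hw₂cop
      have hfin : χ w = χ w₁ * χ w₂ := by
        rw [← hχ.2.1]; exact (chi_congr hχ.1 dd).symm
      rw [hfin, hχw₁, hχw₂, one_mul]

lemma weq (p α lam h : ℕ) (hp : p.Prime) (hα : 1 ≤ α) (hlamdef : lam = p ^ α)
    (hh : 1 ≤ h) (hcop : Nat.Coprime h lam)
    (χ : ℕ → ℂ) (hχ : IsDirichletCharacterSeq (h * lam) χ)
    (T : Finset ℕ) (hT : T ⊆ h.primeFactors)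
    (htriv : ∀ q ∈ T, ∀ w, w ≡ 1 [MOD CoT h lam {q}] → Nat.Coprime w (h * lam) → χ w = 1)
    (z z' : ℕ) (hz' : z' ≡ 1 [MOD MT h T]) (hzz' : z ≡ z' [MOD CoT h lam T])
    (hzcop : Nat.Coprime z (h * lam)) : χ z = χ z' := by
  have hh0 : h ≠ 0 := by omega
  have hMeq : MT h T * CoT h lam T = h * lam := MT_mul_CoT hh0 hT
  have hc : Nat.Coprime (MT h T) (CoT h lam T) := coprime_MT_CoT hp hα hlamdef hh hcop hT
  obtain ⟨u, hu1, hu2⟩ := Nat.chineseRemainder hc z 1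
  have d1 : z' * u ≡ z [MOD MT h T] := by
    calc z' * u ≡ 1 * z [MOD MT h T] := hz'.mul hu1
      _ = z := one_mul z
  have d2 : z' * u ≡ z [MOD CoT h lam T] := by
    calc z' * u ≡ z' * 1 [MOD CoT h lam T] := Nat.ModEq.mul_left z' hu2
      _ = z' := mul_one z'
      _ ≡ z [MOD CoT h lam T] := hzz'.symm
  have dd : z' * u ≡ z [MOD h * lam] := by
    rw [← hMeq]; exact (Nat.modEq_and_modEq_iff_modEq_mul hc).mp ⟨d1, d2⟩
  have hzMT : Nat.Coprime z (MT h T) :=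
    Nat.Coprime.coprime_dvd_right ⟨CoT h lam T, hMeq.symm⟩ hzcop
  have hucop : Nat.Coprime u (h * lam) := by
    rw [← hMeq]; exact coprime_of_parts hu1 hu2 hzMT (Nat.coprime_one_left _)
  have hχu : χ u = 1 := wprime p α lam h hp hα hlamdef hh hcop χ hχ T hT htriv u hu2 hucop
  have hfin : χ z = χ z' * χ u := by
    rw [← hχ.2.1]; exact (chi_congr hχ.1 dd).symm
  rw [hfin, hχu, mul_one]

lemma periodic (p α lam h : ℕ) (hp : p.Prime) (hα : 1 ≤ α) (hlamdef : lam = p ^ α)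
    (hh : 1 ≤ h) (hcop : Nat.Coprime h lam)
    (a : ℕ → ℂ) (haut : IsAutomatic lam a) (ha : IsMultiplicativeSeq a)
    (χ : ℕ → ℂ) (hχ : IsDirichletCharacterSeq (h * lam) χ)
    (haχ : ∀ n : ℕ, 1 ≤ n → Nat.Coprime n (h * lam) → a n = χ n) :
    ∃ D, 1 ≤ D ∧ p ∣ D ∧ ∀ n, n ≠ 0 → ¬ p ∣ n → a (n + D) = a n := by
  classical
  have hh0 : h ≠ 0 := by omega
  have hkey : ∀ q : ℕ, ∃ B : ℕ, 1 ≤ B ∧ (q ∈ h.primeFactors →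
      ((∀ e, B ≤ e → a (q ^ e) = 0) ∨
       ((∀ w, w ≡ 1 [MOD CoT h lam {q}] → Nat.Coprime w (h * lam) → χ w = 1) ∧
        (∀ e, B ≤ e → a (q ^ e) ≠ 0 ∧
          a (q ^ (e + 1)) = χ (LiftT h lam {q} q) * a (q ^ e))))) := by
    intro q
    by_cases hq : q ∈ h.primeFactors
    · obtain ⟨B, hB1, hB2⟩ := keyq p α lam h hp hα hlamdef hh hcop a haut ha χ hχ haχ q hq
      exact ⟨B, hB1, fun _ => hB2⟩
    · exact ⟨1, le_rfl, fun hcon => absurd hcon hq⟩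
  choose B hB1 hB2 using hkey
  have hprodpos : (∏ q ∈ h.primeFactors, q ^ (B q + 1)) ≠ 0 := by
    have : 0 < ∏ q ∈ h.primeFactors, q ^ (B q + 1) :=
      Finset.prod_pos (fun q hq => pow_pos (Nat.prime_of_mem_primeFactors hq).pos _)
    omega
  refine ⟨p * ((h * lam) * ∏ q ∈ h.primeFactors, q ^ (B q + 1)), ?_, dvd_mul_right _ _, ?_⟩
  · have hl0 : lam ≠ 0 := by rw [hlamdef]; exact pow_ne_zero _ hp.pos.ne'
    have := hp.pos
    have h1 : h * lam ≠ 0 := Nat.mul_ne_zero hh0 hl0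
    have : p * ((h * lam) * ∏ q ∈ h.primeFactors, q ^ (B q + 1)) ≠ 0 :=
      Nat.mul_ne_zero hp.pos.ne' (Nat.mul_ne_zero h1 hprodpos)
    omega
  intro n hn hpn
  set D := p * ((h * lam) * ∏ q ∈ h.primeFactors, q ^ (B q + 1)) with hD
  have hpD : p ∣ D := dvd_mul_right _ _
  have hn' : n + D ≠ 0 := by positivity
  have hpn' : ¬ p ∣ (n + D) := by
    intro hd
    exact hpn (by simpa using Nat.dvd_sub hd hpD)
  -- divisibility of prime powers into D
  have hVD : ∀ q ∈ h.primeFactors, q ^ (h.factorization q + (B q + 1)) ∣ D := by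
    intro q hqS
    rw [pow_add]
    have h1 : q ^ h.factorization q ∣ h := Nat.ordProj_dvd h q
    have h2 : q ^ (B q + 1) ∣ ∏ r ∈ h.primeFactors, r ^ (B r + 1) :=
      Finset.dvd_prod_of_mem (fun r => r ^ (B r + 1)) hqS
    have h3 : q ^ h.factorization q * q ^ (B q + 1) ∣
        h * ∏ r ∈ h.primeFactors, r ^ (B r + 1) := mul_dvd_mul h1 h2
    refine dvd_trans h3 ⟨p * lam, by rw [hD]; ring⟩
  -- valuation stability
  have hsmall : ∀ q ∈ h.primeFactors, ∀ m : ℕ, m ≠ 0 →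
      m.factorization q < h.factorization q + (B q + 1) →
      (m + D).factorization q = m.factorization q := by
    intro q hqS m hm hlt
    have hq := Nat.prime_of_mem_primeFactors hqS
    set e := m.factorization q with he
    have h1 : q ^ e ∣ m := Nat.ordProj_dvd m q
    have h2 : q ^ e ∣ D :=
      dvd_trans (pow_dvd_pow q (by omega)) (hVD q hqS)
    have h3 : q ^ (e + 1) ∣ D :=
      dvd_trans (pow_dvd_pow q (by omega)) (hVD q hqS)
    apply fact_eq_of hq (by omega) (dvd_add h1 h2)
    intro hcon
    have : q ^ (e + 1) ∣ m := (Nat.dvd_add_right h3).mp (by rwa [add_comm m D] at hcon)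
    exact Nat.pow_succ_factorization_not_dvd hm hq this
  have hbig : ∀ q ∈ h.primeFactors, ∀ m : ℕ, m ≠ 0 →
      h.factorization q + (B q + 1) ≤ m.factorization q →
      h.factorization q + (B q + 1) ≤ (m + D).factorization q := by
    intro q hqS m hm hle
    have hq := Nat.prime_of_mem_primeFactors hqS
    have h1 : q ^ (h.factorization q + (B q + 1)) ∣ m :=
      (hq.pow_dvd_iff_le_factorization hm).mpr hle
    have h2 := hVD q hqS
    have hmD : m + D ≠ 0 := by omega
    exact (hq.pow_dvd_iff_le_factorization hmD).mp (dvd_add h1 h2)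
  -- B-threshold stability
  have hBiff : ∀ q ∈ h.primeFactors,
      (B q ≤ (n + D).factorization q ↔ B q ≤ n.factorization q) := by
    intro q hqS
    constructor
    · intro hle
      by_contra hcon
      push_neg at hcon
      have := hsmall q hqS n hn (by omega)
      omega
    · intro hle
      by_cases hc : n.factorization q < h.factorization q + (B q + 1)
      · have := hsmall q hqS n hn hc
        omega
      · push_neg at hc
        have := hbig q hqS n hn hc
        omega
  set T := h.primeFactors.filter (fun q => B q ≤ n.factorization q) with hT
  have hTsub : T ⊆ h.primeFactors := Finset.filter_subset _ _
  by_cases hzero : ∃ q ∈ T, ∀ e, B q ≤ e → a (q ^ e) = 0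
  · obtain ⟨q, hqT, hz⟩ := hzero
    have hqS : q ∈ h.primeFactors := hTsub hqT
    have hq := Nat.prime_of_mem_primeFactors hqS
    have hzm : ∀ m : ℕ, m ≠ 0 → B q ≤ m.factorization q → a m = 0 := by
      intro m hm hBm
      have hsplit : a m = a (q ^ m.factorization q) * a (m / q ^ m.factorization q) := by
        conv_lhs => rw [← Nat.ordProj_mul_ordCompl_eq_self m q]
        apply ha.2
        · exact Nat.one_le_iff_ne_zero.mpr (pow_ne_zero _ hq.pos.ne')
        · exact Nat.one_le_iff_ne_zero.mpr (Nat.div_ne_zero_iff_of_dvd (Nat.ordProj_dvd m q) |>.mpr ⟨hm, pow_ne_zero _ hq.pos.ne'⟩)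
        · exact Nat.Coprime.pow_left _ ((hq.coprime_iff_not_dvd).mpr (Nat.not_dvd_ordCompl hq hm))
      rw [hsplit, hz _ hBm, zero_mul]
    have hBn : B q ≤ n.factorization q := (Finset.mem_filter.mp hqT).2
    rw [hzm n hn hBn, hzm (n + D) hn' ((hBiff q hqS).mpr hBn)]
  · push_neg at hzero
    have hgeo : ∀ q ∈ T,
        ((∀ w, w ≡ 1 [MOD CoT h lam {q}] → Nat.Coprime w (h * lam) → χ w = 1) ∧
         (∀ e, B q ≤ e → a (q ^ e) ≠ 0 ∧
           a (q ^ (e + 1)) = χ (LiftT h lam {q} q) * a (q ^ e))) := by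
      intro q hqT
      refine (hB2 q (hTsub hqT)).resolve_left ?_
      intro hall
      obtain ⟨e, hee, hne⟩ := hzero q hqT
      exact hne (hall e hee)
    have hCF : ∀ q ∈ T, ∀ m : ℕ,
        a (q ^ (B q + m)) = χ (LiftT h lam {q} q) ^ m * a (q ^ (B q)) := by
      intro q hqT m
      induction m with
      | zero => simp
      | succ m ih =>
          have : B q + (m + 1) = (B q + m) + 1 := by omega
          rw [this, (hgeo q hqT).2 (B q + m) (by omega) |>.2, ih, pow_succ]
          ring
    -- split both n and n+D
    obtain ⟨es1, es2, es3, es4⟩ :=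
      split p α lam h hp hα hlamdef hh a ha χ haχ n hn hpn
    obtain ⟨et1, et2, et3, et4⟩ :=
      split p α lam h hp hα hlamdef hh a ha χ haχ (n + D) hn' hpn'
    set m1 := n / RadPart h.primeFactors n with hm1
    set m2 := (n + D) / RadPart h.primeFactors (n + D) with hm2
    -- Θ machinery
    have hMeqT : MT h T * CoT h lam T = h * lam := MT_mul_CoT hh0 hTsub
    have hcT : Nat.Coprime (MT h T) (CoT h lam T) :=
      coprime_MT_CoT hp hα hlamdef hh hcop hTsub
    have liftspecT : ∀ m : ℕ, LiftT h lam T m ≡ 1 [MOD MT h T] ∧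
        LiftT h lam T m ≡ m [MOD CoT h lam T] :=
      fun m => liftT_spec hp hα hlamdef hh hcop hTsub m
    have hΘmul : ∀ x y : ℕ, χ (LiftT h lam T (x * y)) = χ (LiftT h lam T x) * χ (LiftT h lam T y) := by
      intro x y
      have hx := liftspecT x
      have hy := liftspecT y
      have hxy := liftspecT (x * y)
      have d1 : LiftT h lam T x * LiftT h lam T y ≡ LiftT h lam T (x * y) [MOD MT h T] := by
        calc LiftT h lam T x * LiftT h lam T y ≡ 1 * 1 [MOD MT h T] := hx.1.mul hy.1
          _ = 1 := one_mul 1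
          _ ≡ LiftT h lam T (x * y) [MOD MT h T] := hxy.1.symm
      have d2 : LiftT h lam T x * LiftT h lam T y ≡ LiftT h lam T (x * y) [MOD CoT h lam T] :=
        (hx.2.mul hy.2).trans hxy.2.symm
      have dd : LiftT h lam T x * LiftT h lam T y ≡ LiftT h lam T (x * y) [MOD h * lam] := by
        rw [← hMeqT]; exact (Nat.modEq_and_modEq_iff_modEq_mul hcT).mp ⟨d1, d2⟩
      rw [← chi_congr hχ.1 dd, hχ.2.1]
    have hΘone : χ (LiftT h lam T 1) = 1 := by
      have h1 := liftspecT 1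
      have hdd : LiftT h lam T 1 ≡ 1 [MOD h * lam] := by
        rw [← hMeqT]; exact (Nat.modEq_and_modEq_iff_modEq_mul hcT).mp ⟨h1.1, h1.2⟩
      rw [chi_congr hχ.1 hdd]; exact chi_one hχ
    set ΘM : ℕ →* ℂ :=
      { toFun := fun m => χ (LiftT h lam T m), map_one' := hΘone, map_mul' := hΘmul } with hΘM
    have htriv : ∀ q ∈ T, ∀ w, w ≡ 1 [MOD CoT h lam {q}] → Nat.Coprime w (h * lam) →
        χ w = 1 := fun q hqT => (hgeo q hqT).1
    -- χ m = ΘM m for coprime m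
    have hA1 : ∀ m : ℕ, Nat.Coprime m (h * lam) → χ m = ΘM m := by
      intro m hmcop
      exact weq p α lam h hp hα hlamdef hh hcop χ hχ T hTsub htriv m (LiftT h lam T m)
        (liftspecT m).1 (liftspecT m).2.symm hmcop
    -- χ (LiftT {q} q) = ΘM q for q ∈ T
    have hA2 : ∀ q ∈ T, χ (LiftT h lam {q} q) = ΘM q := by
      intro q hqT
      have hqS : q ∈ h.primeFactors := hTsub hqT
      obtain ⟨hq, hqh, hγ1, hqlam, hqp⟩ := prime_facts hp hα hlamdef hh hcop hqS
      have hqsub : ({q} : Finset ℕ) ⊆ h.primeFactors := by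
        intro z hz; rw [Finset.mem_singleton] at hz; rwa [hz]
      have hspecq := liftT_spec hp hα hlamdef hh hcop hqsub q
      have hqCoq : Nat.Coprime q (CoT h lam {q}) := by
        unfold CoT
        apply Nat.Coprime.mul_right hqlam
        apply Nat.Coprime.prod_right
        intro r hr
        obtain ⟨hrS, hrq⟩ := Finset.mem_sdiff.mp hr
        have hrp := Nat.prime_of_mem_primeFactors hrS
        refine Nat.Coprime.pow_right _ ((Nat.coprime_primes hq hrp).mpr ?_)
        intro hqr
        exact hrq (by rw [← hqr]; exact Finset.mem_singleton_self q)
      have hzcop : Nat.Coprime (LiftT h lam {q} q) (h * lam) := by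
        rw [← MT_mul_CoT hh0 hqsub]
        exact coprime_of_parts hspecq.1 hspecq.2 (Nat.coprime_one_left _) hqCoq
      have hCoTdvd : CoT h lam T ∣ CoT h lam {q} := by
        unfold CoT
        apply mul_dvd_mul_left
        apply Finset.prod_dvd_prod_of_subset
        apply Finset.sdiff_subset_sdiff (Finset.Subset.refl _)
        intro z hz
        rw [Finset.mem_singleton] at hz
        rw [hz]; exact hqT
      have hzz' : LiftT h lam {q} q ≡ LiftT h lam T q [MOD CoT h lam T] :=
        (Nat.ModEq.of_dvd hCoTdvd hspecq.2).trans (liftspecT q).2.symm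
      exact weq p α lam h hp hα hlamdef hh hcop χ hχ T hTsub htriv _ _
        (liftspecT q).1 hzz' hzcop
    -- the comparison of the variable parts
    set u1 := (∏ q ∈ T, q ^ (n.factorization q - B q)) * m1 with hu1
    set u2 := (∏ q ∈ T, q ^ ((n + D).factorization q - B q)) * m2 with hu2
    set C := (∏ q ∈ T, q ^ B q) * (∏ q ∈ h.primeFactors \ T, q ^ n.factorization q) with hC
    have hsmallT : ∀ q ∈ h.primeFactors \ T, (n + D).factorization q = n.factorization q := by
      intro q hq
      obtain ⟨hqS, hqnT⟩ := Finset.mem_sdiff.mp hq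
      have : ¬ B q ≤ n.factorization q := by
        intro hcon
        exact hqnT (Finset.mem_filter.mpr ⟨hqS, hcon⟩)
      exact hsmall q hqS n hn (by omega)
    have hbigT : ∀ q ∈ T, B q ≤ n.factorization q := fun q hqT => (Finset.mem_filter.mp hqT).2
    have hbigT' : ∀ q ∈ T, B q ≤ (n + D).factorization q := by
      intro q hqT
      exact (hBiff q (hTsub hqT)).mpr (hbigT q hqT)
    have hCu1 : C * u1 = n := by
      have hrad : RadPart h.primeFactors n =
          (∏ q ∈ h.primeFactors \ T, q ^ n.factorization q) *
          ((∏ q ∈ T, q ^ B q) * (∏ q ∈ T, q ^ (n.factorization q - B q))) := by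
        unfold RadPart
        rw [← Finset.prod_sdiff hTsub]
        congr 1
        rw [← Finset.prod_mul_distrib]
        refine Finset.prod_congr rfl (fun q hqT => ?_)
        rw [← pow_add]
        congr 1
        have := hbigT q hqT
        omega
      have hradm : RadPart h.primeFactors n * m1 = n := Nat.mul_div_cancel' es2
      have step : C * u1 = RadPart h.primeFactors n * m1 := by
        rw [hrad, hC, hu1]; ring
      rw [step, hradm]
    have hCu2 : C * u2 = n + D := by
      have hrad : RadPart h.primeFactors (n + D) =
          (∏ q ∈ h.primeFactors \ T, q ^ n.factorization q) *
          ((∏ q ∈ T, q ^ B q) * (∏ q ∈ T, q ^ ((n + D).factorization q - B q))) := by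
        unfold RadPart
        rw [← Finset.prod_sdiff hTsub]
        congr 1
        · exact Finset.prod_congr rfl (fun q hq => by rw [hsmallT q hq])
        · rw [← Finset.prod_mul_distrib]
          refine Finset.prod_congr rfl (fun q hqT => ?_)
          rw [← pow_add]
          congr 1
          have := hbigT' q hqT
          omega
      have hradm : RadPart h.primeFactors (n + D) * m2 = n + D := Nat.mul_div_cancel' et2
      have step : C * u2 = RadPart h.primeFactors (n + D) * m2 := by
        rw [hrad, hC, hu2]; ring
      rw [step, hradm]
    have hC0 : C ≠ 0 := by
      have : 0 < C := by
        rw [hC]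
        apply Nat.mul_pos
        · exact Finset.prod_pos (fun q hq =>
            pow_pos (Nat.prime_of_mem_primeFactors (hTsub hq)).pos _)
        · exact Finset.prod_pos (fun q hq =>
            pow_pos (Nat.prime_of_mem_primeFactors (Finset.mem_sdiff.mp hq).1).pos _)
      omega
    have hCD : C * CoT h lam T ∣ D := by
      have hCdvd : C ∣ ∏ q ∈ h.primeFactors, q ^ (B q + 1) := by
        have h1 : (∏ q ∈ T, q ^ B q) ∣ ∏ q ∈ T, q ^ (B q + 1) := by
          apply Finset.prod_dvd_prod_of_dvd
          intro q hq
          exact pow_dvd_pow q (by omega)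
        have h2 : (∏ q ∈ h.primeFactors \ T, q ^ n.factorization q) ∣
            ∏ q ∈ h.primeFactors \ T, q ^ (B q + 1) := by
          apply Finset.prod_dvd_prod_of_dvd
          intro q hq
          have hnot : ¬ B q ≤ n.factorization q := by
            intro hcon
            exact (Finset.mem_sdiff.mp hq).2
              (Finset.mem_filter.mpr ⟨(Finset.mem_sdiff.mp hq).1, hcon⟩)
          exact pow_dvd_pow q (by omega)
        calc C = (∏ q ∈ T, q ^ B q) * (∏ q ∈ h.primeFactors \ T, q ^ n.factorization q) := hC
          _ ∣ (∏ q ∈ T, q ^ (B q + 1)) * (∏ q ∈ h.primeFactors \ T, q ^ (B q + 1)) :=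
              mul_dvd_mul h1 h2
          _ = ∏ q ∈ h.primeFactors, q ^ (B q + 1) := by
              rw [mul_comm]; exact Finset.prod_sdiff hTsub
      obtain ⟨E, hE⟩ := hCdvd
      refine ⟨p * MT h T * E, ?_⟩
      rw [hD, hE, ← hMeqT]
      ring
    have huu : u1 ≡ u2 [MOD CoT h lam T] := by
      have h1 : n ≡ n + D [MOD C * CoT h lam T] := by
        have : C * CoT h lam T ∣ (n + D) - n := by simpa using hCD
        exact ((Nat.modEq_iff_dvd' (by omega)).mpr this)
      have h2 : C * u1 ≡ C * u2 [MOD C * CoT h lam T] := by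
        rw [hCu1, hCu2]; exact h1
      exact Nat.ModEq.mul_left_cancel' hC0 h2
    have hΘuu : ΘM u1 = ΘM u2 := by
      have d1 : LiftT h lam T u1 ≡ LiftT h lam T u2 [MOD MT h T] :=
        (liftspecT u1).1.trans (liftspecT u2).1.symm
      have d2 : LiftT h lam T u1 ≡ LiftT h lam T u2 [MOD CoT h lam T] :=
        ((liftspecT u1).2.trans huu).trans (liftspecT u2).2.symm
      have dd : LiftT h lam T u1 ≡ LiftT h lam T u2 [MOD h * lam] := by
        rw [← hMeqT]; exact (Nat.modEq_and_modEq_iff_modEq_mul hcT).mp ⟨d1, d2⟩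
      exact chi_congr hχ.1 dd
    -- final computation
    have hTprod : ∀ (mm : ℕ) (hm : ∀ q ∈ T, B q ≤ mm.factorization q)
        (hcopm : Nat.Coprime (mm / RadPart h.primeFactors mm) (h * lam)),
        True := fun _ _ _ => trivial
    have hfact1 : (∏ q ∈ T, a (q ^ n.factorization q)) =
        (∏ q ∈ T, a (q ^ B q)) * ΘM ((∏ q ∈ T, q ^ (n.factorization q - B q))) := by
      rw [map_prod]
      rw [← Finset.prod_mul_distrib]
      refine Finset.prod_congr rfl (fun q hqT => ?_)
      have hBe : B q + (n.factorization q - B q) = n.factorization q := by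
        have := hbigT q hqT
        omega
      have hCFq := hCF q hqT (n.factorization q - B q)
      rw [hBe] at hCFq
      rw [hCFq, hA2 q hqT, ← map_pow]
      ring
    have hfact2 : (∏ q ∈ T, a (q ^ (n + D).factorization q)) =
        (∏ q ∈ T, a (q ^ B q)) * ΘM ((∏ q ∈ T, q ^ ((n + D).factorization q - B q))) := by
      rw [map_prod]
      rw [← Finset.prod_mul_distrib]
      refine Finset.prod_congr rfl (fun q hqT => ?_)
      have hBe : B q + ((n + D).factorization q - B q) = (n + D).factorization q := by
        have := hbigT' q hqT
        omega
      have hCFq := hCF q hqT ((n + D).factorization q - B q)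
      rw [hBe] at hCFq
      rw [hCFq, hA2 q hqT, ← map_pow]
      ring
    have hsplitprod1 : (∏ q ∈ h.primeFactors, a (q ^ n.factorization q)) =
        (∏ q ∈ h.primeFactors \ T, a (q ^ n.factorization q)) * (∏ q ∈ T, a (q ^ n.factorization q)) :=
      (Finset.prod_sdiff hTsub).symm
    have hsplitprod2 : (∏ q ∈ h.primeFactors, a (q ^ (n + D).factorization q)) =
        (∏ q ∈ h.primeFactors \ T, a (q ^ n.factorization q)) * (∏ q ∈ T, a (q ^ (n + D).factorization q)) := by
      rw [← Finset.prod_sdiff hTsub (f := fun q => a (q ^ (n + D).factorization q))]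
      congr 1
      exact Finset.prod_congr rfl (fun q hq => by rw [hsmallT q hq])
    rw [es1, et1, hsplitprod1, hsplitprod2, hfact1, hfact2]
    rw [hA1 m1 es4, hA1 m2 et4]
    have hu1val : ΘM (∏ q ∈ T, q ^ (n.factorization q - B q)) * ΘM m1 = ΘM u1 := by
      rw [hu1, map_mul]
    have hu2val : ΘM (∏ q ∈ T, q ^ ((n + D).factorization q - B q)) * ΘM m2 = ΘM u2 := by
      rw [hu2, map_mul]
    calc (∏ q ∈ h.primeFactors \ T, a (q ^ n.factorization q)) *
          ((∏ q ∈ T, a (q ^ B q)) * ΘM (∏ q ∈ T, q ^ ((n+D).factorization q - B q))) * ΘM m2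
        = (∏ q ∈ h.primeFactors \ T, a (q ^ n.factorization q)) * (∏ q ∈ T, a (q ^ B q)) * ΘM u2 := by
          rw [← hu2val]; ring
      _ = (∏ q ∈ h.primeFactors \ T, a (q ^ n.factorization q)) * (∏ q ∈ T, a (q ^ B q)) * ΘM u1 := by
          rw [hΘuu]
      _ = (∏ q ∈ h.primeFactors \ T, a (q ^ n.factorization q)) *
          ((∏ q ∈ T, a (q ^ B q)) * ΘM (∏ q ∈ T, q ^ (n.factorization q - B q))) * ΘM m1 := by
          rw [← hu1val]; ring

lemma f1lemma (p α lam : ℕ) (hp : p.Prime) (hα : 1 ≤ α) (hlamdef : lam = p ^ α)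
    (a : ℕ → ℂ) (haut : IsAutomatic lam a) :
    ∃ d : ℕ, 1 ≤ d ∧ ∃ n₀ : ℕ, ∀ k, n₀ ≤ k → a (p ^ (k + d)) = a (p ^ k) := by
  have hlam0 : 0 < lam := by rw [hlamdef]; exact pow_pos hp.pos α
  obtain ⟨k₁, k₂, hk1, hlt, heq⟩ := pigeon haut (fun k => fun n => a (lam ^ k * n))
    (fun k _ => ⟨k, 0, pow_pos hlam0 k, by funext n; rw [add_zero]⟩)
  have hGext : ∀ j n, a (lam ^ (k₁ + j) * n) = a (lam ^ (k₂ + j) * n) := by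
    intro j n
    have h1 := congrFun heq (lam ^ j * n)
    have e1 : lam ^ k₁ * (lam ^ j * n) = lam ^ (k₁ + j) * n := by rw [pow_add]; ring
    have e2 : lam ^ k₂ * (lam ^ j * n) = lam ^ (k₂ + j) * n := by rw [pow_add]; ring
    rw [e1, e2] at h1
    exact h1
  refine ⟨α * (k₂ - k₁), by simpa using Nat.mul_le_mul hα (by omega : 1 ≤ k₂ - k₁), α * k₁, ?_⟩
  intro k hk
  set t := k - α * k₁ with ht
  set j := t / α with hj
  set s := t % α with hs
  have hts : α * j + s = t := Nat.div_add_mod t α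
  have hd1 : α * (k₁ + j) = α * k₁ + α * j := by ring
  have hd2 : α * (k₂ + j) = α * k₂ + α * j := by ring
  have hd3 : α * (k₂ - k₁) + α * k₁ = α * k₂ := by rw [← Nat.mul_add]; congr 1; omega
  have hk_eq : k = α * (k₁ + j) + s := by omega
  have hk_eq2 : k + α * (k₂ - k₁) = α * (k₂ + j) + s := by omega
  have hpow : ∀ m : ℕ, p ^ (α * m + s) = lam ^ m * p ^ s := by
    intro m
    rw [hlamdef, ← pow_mul, ← pow_add]
  rw [hk_eq2, hpow (k₂ + j), ← hGext j (p ^ s), ← hpow (k₁ + j), ← hk_eq]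

end SP16

theorem stmt_16 (p : ℕ) (hp : p.Prime) (α : ℕ) (hα : 1 ≤ α)
    (lam : ℕ) (hlamdef : lam = p ^ α)
    (h : ℕ) (hh : 1 ≤ h) (hcop : Nat.Coprime h lam)
    (a : ℕ → ℂ) (haut : IsAutomatic lam a) (ha : IsMultiplicativeSeq a)
    (χ : ℕ → ℂ) (hχ : IsDirichletCharacterSeq (h * lam) χ)
    (haχ : ∀ n : ℕ, 1 ≤ n → Nat.Coprime n (h * lam) → a n = χ n) :
    ∃ f₁ f₂ : ℕ → ℂ,
      EventuallyPeriodicSeq f₁ ∧ f₁ 0 = 1 ∧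
      IsMultiplicativeSeq f₂ ∧
      (∃ d : ℕ, 1 ≤ d ∧ ∀ n : ℕ, 1 ≤ n → f₂ (n + d) = f₂ n) ∧
      ∀ n : ℕ, 1 ≤ n →
        a n = f₁ (padicValNat p n) * f₂ (n / p ^ padicValNat p n) := by
  classical
  obtain ⟨D, hD1, hpD, hper⟩ :=
    SP16.periodic p α lam h hp hα hlamdef hh hcop a haut ha χ hχ haχ
  obtain ⟨d1, hd1, n₀, hf1⟩ := SP16.f1lemma p α lam hp hα hlamdef a haut
  refine ⟨fun k => a (p ^ k), fun n => if p ∣ n then 0 else a n,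
    ⟨d1, hd1, n₀, fun k hk => hf1 k hk⟩, ?_, ?_, ⟨D, hD1, ?_⟩, ?_⟩
  · simpa using ha.1
  · constructor
    · have hnd : ¬ p ∣ 1 := hp.not_dvd_one
      simp only [if_neg hnd]
      exact ha.1
    · intro m n hm hn hmn
      by_cases hpm : p ∣ m
      · have hd : p ∣ m * n := dvd_mul_of_dvd_left hpm n
        simp [hpm, hd]
      · by_cases hpn : p ∣ n
        · have hd : p ∣ m * n := dvd_mul_of_dvd_right hpn m
          simp [hpn, hd]
        · have hd : ¬ p ∣ m * n := by
            intro hd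
            rcases (hp.dvd_mul).mp hd with h' | h'
            exacts [hpm h', hpn h']
          simp only [if_neg hpm, if_neg hpn, if_neg hd]
          exact ha.2 m n hm hn hmn
  · intro n hn
    by_cases hpn : p ∣ n
    · have hd : p ∣ n + D := dvd_add hpn hpD
      simp [hpn, hd]
    · have hnD : ¬ p ∣ (n + D) := by
        intro hd
        exact hpn (by simpa using Nat.dvd_sub hd hpD)
      simp only [if_neg hpn, if_neg hnD]
      exact hper n (by omega) hpn
  · intro n hn
    have hn0 : n ≠ 0 := by omega
    set e := padicValNat p n with he
    have hfe : n.factorization p = e := by rw [he]; exact Nat.factorization_def n hp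
    have hdvd : p ^ e ∣ n := by rw [← hfe]; exact Nat.ordProj_dvd n p
    have hsplit : n = p ^ e * (n / p ^ e) := (Nat.mul_div_cancel' hdvd).symm
    have hnd0 : n / p ^ e ≠ 0 := by
      intro h0
      rw [h0, mul_zero] at hsplit
      exact hn0 hsplit
    have hnotdvd : ¬ p ∣ (n / p ^ e) := by
      rw [← hfe]; exact Nat.not_dvd_ordCompl hp hn0
    have hval : a n = a (p ^ e) * a (n / p ^ e) := by
      conv_lhs => rw [hsplit]
      exact ha.2 _ _ (Nat.one_le_iff_ne_zero.mpr (pow_ne_zero _ hp.pos.ne'))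
        (Nat.one_le_iff_ne_zero.mpr hnd0)
        (Nat.Coprime.pow_left _ ((hp.coprime_iff_not_dvd).mpr hnotdvd))
    rw [hval]
    simp only [if_neg hnotdvd]
end

section
/- Let p be a prime, let f₁ : ℕ → ℂ be eventually periodic with f₁(0) = 1, let f₂ : ℕ → ℂ be multiplicative, eventually periodic, with f₂(n) = 0 whenever p ∣ n, and let a : ℕ → ℂ satisfy a(n) = f₁(ν_p(n)) · f₂(n / p^{ν_p(n)}) for all n ≥ 1. Suppose the averages (1/N)·∑_{n=1}^{N} f₂(n) converge to m ∈ ℂ as N → ∞. Then the averages (1/N)·∑_{n=1}^{N} a(n) converge as N → ∞ to m · ∑_{k=0}^{∞} f₁(k)/p^k (the series converges absolutely since f₁ is bounded). -/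
/-- Eventually periodic sequences are bounded. -/
lemma aux_bdd (f : ℕ → ℂ) (h : EventuallyPeriodicSeq f) :
    ∃ C : ℝ, 0 ≤ C ∧ ∀ n, ‖f n‖ ≤ C := by
  obtain ⟨d, hd, n₀, hper⟩ := h
  refine ⟨∑ j ∈ Finset.range (n₀ + d), ‖f j‖, Finset.sum_nonneg fun _ _ => norm_nonneg _, ?_⟩
  intro n
  induction n using Nat.strong_induction_on with
  | _ n ih =>
    by_cases hn : n < n₀ + d
    · exact Finset.single_le_sum (f := fun j => ‖f j‖) (fun _ _ => norm_nonneg _)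
        (Finset.mem_range.mpr hn)
    · push_neg at hn
      have h1 : n - d ≥ n₀ := by omega
      have h2 : (n - d) + d = n := by omega
      have := hper (n - d) h1
      rw [h2] at this
      rw [this]
      exact ih (n - d) (by omega)

open Filter in
theorem stmt_19 (p : ℕ) (hp : p.Prime)
    (f₁ : ℕ → ℂ) (hf₁ : EventuallyPeriodicSeq f₁) (hf₁0 : f₁ 0 = 1)
    (f₂ : ℕ → ℂ) (hf₂m : IsMultiplicativeSeq f₂) (hf₂ : EventuallyPeriodicSeq f₂)
    (hf₂0 : ∀ n : ℕ, p ∣ n → f₂ n = 0)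
    (a : ℕ → ℂ)
    (hdef : ∀ n : ℕ, 1 ≤ n →
      a n = f₁ (padicValNat p n) * f₂ (n / p ^ padicValNat p n))
    (m : ℂ)
    (hconv : Tendsto (fun N : ℕ => (N : ℂ)⁻¹ * ∑ n ∈ Finset.Icc 1 N, f₂ n)
      atTop (nhds m)) :
    Tendsto (fun N : ℕ => (N : ℂ)⁻¹ * ∑ n ∈ Finset.Icc 1 N, a n)
      atTop (nhds (m * ∑' k : ℕ, f₁ k / (p : ℂ) ^ k)) := by
  classical
  haveI : Fact p.Prime := ⟨hp⟩
  have hp2 : 2 ≤ p := hp.two_le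
  have hppos : 0 < p := by omega
  set T : ℕ → ℂ := fun M => ∑ n ∈ Finset.Icc 1 M, f₂ n with hT
  obtain ⟨C₁, hC₁0, hC₁⟩ := aux_bdd f₁ hf₁
  obtain ⟨C₂, hC₂0, hC₂⟩ := aux_bdd f₂ hf₂
  -- key combinatorial identity
  have key : ∀ N : ℕ, ∑ n ∈ Finset.Icc 1 N, a n
      = ∑ k ∈ Finset.range (N + 1), f₁ k * T (N / p ^ k) := by
    intro N
    have : ∀ k, f₁ k * T (N / p ^ k)
        = ∑ x ∈ (Finset.Icc 1 (N / p ^ k)).filter (fun x => ¬ p ∣ x), f₁ k * f₂ x := by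
      intro k
      rw [Finset.sum_filter_of_ne, ← Finset.mul_sum]
      intro x _ hx hdvd
      exact hx (by rw [hf₂0 x hdvd, mul_zero])
    simp_rw [this]
    rw [Finset.sum_sigma']
    refine Finset.sum_nbij' (fun n => (⟨padicValNat p n, n / p ^ padicValNat p n⟩ :
        Σ _ : ℕ, ℕ)) (fun x => p ^ x.1 * x.2) ?_ ?_ ?_ ?_ ?_
    · -- forward map lands in sigma set
      intro n hn
      simp only [Finset.mem_Icc] at hn
      have hn0 : n ≠ 0 := by omega
      have hdvd : p ^ padicValNat p n ∣ n := pow_padicValNat_dvd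
      simp only [Finset.mem_sigma, Finset.mem_range, Finset.mem_filter, Finset.mem_Icc]
      refine ⟨?_, ⟨Nat.one_le_div_iff (Nat.pos_of_ne_zero (by positivity)) |>.mpr
        (Nat.le_of_dvd (by omega) hdvd), Nat.div_le_div_right hn.2⟩, ?_⟩
      · have h1 : p ^ padicValNat p n ≤ n := Nat.le_of_dvd (by omega) hdvd
        have h2 : padicValNat p n < p ^ padicValNat p n := Nat.lt_pow_self hp.one_lt
        omega
      · have := Nat.not_dvd_ordCompl hp hn0
        rwa [Nat.factorization_def n hp] at this
    · -- backward map lands in Icc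
      rintro ⟨k, x⟩ hx
      simp only [Finset.mem_sigma, Finset.mem_range, Finset.mem_filter, Finset.mem_Icc] at hx
      obtain ⟨hk, ⟨hx1, hx2⟩, hxp⟩ := hx
      simp only [Finset.mem_Icc]
      constructor
      · have : 0 < p ^ k := by positivity
        nlinarith
      · calc p ^ k * x ≤ p ^ k * (N / p ^ k) := by
              exact Nat.mul_le_mul_left _ hx2
          _ ≤ N := Nat.mul_div_le N (p ^ k)
    · -- left inverse
      intro n hn
      simp only [Finset.mem_Icc] at hn
      exact Nat.mul_div_cancel' pow_padicValNat_dvd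
    · -- right inverse
      rintro ⟨k, x⟩ hx
      simp only [Finset.mem_sigma, Finset.mem_range, Finset.mem_filter, Finset.mem_Icc] at hx
      obtain ⟨hk, ⟨hx1, hx2⟩, hxp⟩ := hx
      have hx0 : x ≠ 0 := by omega
      have hv : padicValNat p (p ^ k * x) = k := by
        rw [padicValNat.mul (by positivity) hx0, padicValNat.prime_pow,
          padicValNat.eq_zero_of_not_dvd hxp, add_zero]
      simp only [hv]
      congr 1
      exact Nat.mul_div_cancel_left x (by positivity)
    · -- values agree
      intro n hn
      simp only [Finset.mem_Icc] at hn
      exact hdef n hn.1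
  -- the terms of the outer sum, normalized
  set F : ℕ → ℕ → ℂ := fun N k => if k < N + 1 then f₁ k * T (N / p ^ k) * (N : ℂ)⁻¹ else 0
    with hF
  have heq : ∀ N : ℕ, (N : ℂ)⁻¹ * ∑ n ∈ Finset.Icc 1 N, a n = ∑' k, F N k := by
    intro N
    rw [key N, mul_comm, Finset.sum_mul,
      tsum_eq_sum (s := Finset.range (N + 1)) (f := F N) (by
        intro k hk
        simp only [Finset.mem_range] at hk
        simp only [hF, if_neg hk])]
    refine Finset.sum_congr rfl fun k hk => ?_
    simp only [Finset.mem_range] at hk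
    simp only [hF, if_pos hk]
  rw [show Tendsto (fun N : ℕ => (N : ℂ)⁻¹ * ∑ n ∈ Finset.Icc 1 N, a n) atTop
      (nhds (m * ∑' k : ℕ, f₁ k / (p : ℂ) ^ k))
    = Tendsto (fun N : ℕ => ∑' k, F N k) atTop
      (nhds (∑' k : ℕ, f₁ k * m * ((p : ℂ) ^ k)⁻¹)) from by
    congr 1
    · exact funext heq
    · rw [← tsum_mul_left]
      exact congrArg nhds (tsum_congr fun k => by ring)]
  -- dominated convergence
  apply tendsto_tsum_of_dominated_convergence
    (bound := fun k => C₁ * C₂ * ((p : ℝ)⁻¹) ^ k)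
  · exact (summable_geometric_of_lt_one (by positivity)
      (by rw [inv_lt_one_iff₀]; right; exact_mod_cast by omega)).mul_left _
  · -- pointwise limits
    intro k
    have hqpos : 0 < p ^ k := by positivity
    have hM : Tendsto (fun N : ℕ => N / p ^ k) atTop atTop := by
      refine tendsto_atTop_atTop.mpr fun b => ⟨b * p ^ k, fun n hn => ?_⟩
      exact (Nat.le_div_iff_mul_le hqpos).mpr hn
    have hR : Tendsto (fun N : ℕ => ((N / p ^ k : ℕ) : ℝ) * (N : ℝ)⁻¹) atTop
        (nhds (((p : ℝ) ^ k)⁻¹)) := by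
      have h0 : Tendsto (fun N : ℕ => ((N / p ^ k : ℕ) : ℝ) * (N : ℝ)⁻¹ - ((p : ℝ) ^ k)⁻¹)
          atTop (nhds 0) := by
        apply squeeze_zero_norm' (a := fun N : ℕ => (N : ℝ)⁻¹)
        · filter_upwards [eventually_ge_atTop 1] with N hN
          have hN0 : (0 : ℝ) < N := by exact_mod_cast hN
          have hq0 : (0 : ℝ) < (p : ℝ) ^ k := by positivity
          have hmod : ((p ^ k : ℕ) : ℝ) * ((N / p ^ k : ℕ) : ℝ) + ((N % p ^ k : ℕ) : ℝ)
              = (N : ℝ) := by exact_mod_cast Nat.div_add_mod N (p ^ k)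
          have hrlt : ((N % p ^ k : ℕ) : ℝ) < (p : ℝ) ^ k := by
            exact_mod_cast Nat.mod_lt N hqpos
          have hrnn : (0 : ℝ) ≤ ((N % p ^ k : ℕ) : ℝ) := by positivity
          have hcast : ((p ^ k : ℕ) : ℝ) = (p : ℝ) ^ k := by push_cast; ring
          rw [hcast] at hmod
          have hMq : ((N / p ^ k : ℕ) : ℝ) = ((N : ℝ) - ((N % p ^ k : ℕ) : ℝ)) / (p : ℝ) ^ k := by
            field_simp
            linarith [hmod]
          have key2 : ((N / p ^ k : ℕ) : ℝ) * (N : ℝ)⁻¹ - ((p : ℝ) ^ k)⁻¹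
              = -(((N % p ^ k : ℕ) : ℝ) / ((p : ℝ) ^ k * N)) := by
            rw [hMq]
            field_simp
            ring
          rw [key2, norm_neg, Real.norm_eq_abs, abs_of_nonneg (by positivity),
            div_le_iff₀ (by positivity)]
          calc ((N % p ^ k : ℕ) : ℝ) ≤ (p : ℝ) ^ k := le_of_lt hrlt
            _ = (N : ℝ)⁻¹ * ((p : ℝ) ^ k * N) := by field_simp
        · exact tendsto_inv_atTop_nhds_zero_nat
      have := h0.add_const (((p : ℝ) ^ k)⁻¹)
      simpa using this
    have hRc : Tendsto (fun N : ℕ => ((N / p ^ k : ℕ) : ℂ) * (N : ℂ)⁻¹) atTop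
        (nhds (((p : ℂ) ^ k)⁻¹)) := by
      have h2 := (Complex.continuous_ofReal.tendsto _).comp hR
      simp only [Function.comp_def] at h2
      have e1 : (fun N : ℕ => ((((N / p ^ k : ℕ) : ℝ) * (N : ℝ)⁻¹ : ℝ) : ℂ))
          = fun N : ℕ => ((N / p ^ k : ℕ) : ℂ) * (N : ℂ)⁻¹ := by
        funext N; push_cast; ring
      have e2 : ((((p : ℝ) ^ k)⁻¹ : ℝ) : ℂ) = ((p : ℂ) ^ k)⁻¹ := by push_cast; ring
      rw [e1, e2] at h2
      exact h2
    have hA : Tendsto (fun N : ℕ => ((N / p ^ k : ℕ) : ℂ)⁻¹ * T (N / p ^ k)) atTop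
        (nhds m) := hconv.comp hM
    have hfull := (hA.mul hRc).const_mul (f₁ k)
    refine Tendsto.congr' ?_ (by convert hfull using 2; ring)
    filter_upwards [eventually_ge_atTop (p ^ k)] with N hN
    have hk1 : k < N + 1 := by
      have : k < p ^ k := Nat.lt_pow_self hp.one_lt
      omega
    have hM1 : 1 ≤ N / p ^ k := (Nat.le_div_iff_mul_le hqpos).mpr (by omega)
    have hMne : ((N / p ^ k : ℕ) : ℂ) ≠ 0 := Nat.cast_ne_zero.mpr (by omega)
    simp only [hF, if_pos hk1]
    field_simp
  · -- domination
    filter_upwards [eventually_ge_atTop 1] with N hN k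
    by_cases hk : k < N + 1
    · have hN0 : (0 : ℝ) < N := by exact_mod_cast hN
      have hqpos : 0 < p ^ k := by positivity
      have hq0 : (0 : ℝ) < (p : ℝ) ^ k := by positivity
      have hTb : ‖T (N / p ^ k)‖ ≤ C₂ * ((N / p ^ k : ℕ) : ℝ) := by
        calc ‖T (N / p ^ k)‖ ≤ ∑ n ∈ Finset.Icc 1 (N / p ^ k), ‖f₂ n‖ :=
              norm_sum_le _ _
          _ ≤ ∑ _n ∈ Finset.Icc 1 (N / p ^ k), C₂ :=
              Finset.sum_le_sum fun n _ => hC₂ n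
          _ = C₂ * ((N / p ^ k : ℕ) : ℝ) := by
              rw [Finset.sum_const, Nat.card_Icc]
              simp [mul_comm]
      have hratio : ((N / p ^ k : ℕ) : ℝ) * (N : ℝ)⁻¹ ≤ ((p : ℝ) ^ k)⁻¹ := by
        rw [← div_eq_mul_inv, inv_eq_one_div, div_le_div_iff₀ hN0 hq0, one_mul]
        calc ((N / p ^ k : ℕ) : ℝ) * (p : ℝ) ^ k = (((N / p ^ k) * p ^ k : ℕ) : ℝ) := by
              push_cast; ring
          _ ≤ (N : ℝ) := by exact_mod_cast Nat.div_mul_le_self N (p ^ k)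
      simp only [hF, if_pos hk]
      calc ‖f₁ k * T (N / p ^ k) * (N : ℂ)⁻¹‖
          = ‖f₁ k‖ * ‖T (N / p ^ k)‖ * (N : ℝ)⁻¹ := by
            rw [norm_mul, norm_mul, norm_inv, Complex.norm_natCast]
        _ ≤ C₁ * (C₂ * ((N / p ^ k : ℕ) : ℝ)) * (N : ℝ)⁻¹ := by
            gcongr
            exact hC₁ k
        _ = C₁ * C₂ * (((N / p ^ k : ℕ) : ℝ) * (N : ℝ)⁻¹) := by ring
        _ ≤ C₁ * C₂ * ((p : ℝ) ^ k)⁻¹ := by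
            gcongr
        _ = C₁ * C₂ * ((p : ℝ)⁻¹) ^ k := by rw [inv_pow]
    · simp only [hF, if_neg hk, norm_zero]
      positivity
end
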